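/- arXiv:1407.4517 — 2 statements merged into one kernel-verified Lean document; each statement's English description precedes it below -/
import Mathlib

section
/- Let $B$ be a ball in $\mathbb{R}^n$, $n \ge 3$, let $a, b \in (0,n)$ and $\sigma > \frac{a}{n-b}$. Then there exists a constant $C = C(n,\sigma,a,b) > 0$ such that for every nonnegative $f \in L^\infty(B)$, $\|\mathbf{U}_{a,b,\sigma} f\|_{L^\infty(B)} \le C \|f\|_{L^1(B)}^{(a+b\sigma)/n} \|f\|_{L^\infty(B)}^{(\sigma(n-b)-a)/n}$. -/
open MeasureTheory Metric Filter Topology Set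
open scoped ENNReal

noncomputable section


/-- dyadic covering, small radii -/
lemma cover_small {t d : ℝ} (h0 : 0 < d) (hdt : d < t) :
    ∃ j : ℕ, t * 2 ^ (-(j:ℝ) - 1) ≤ d ∧ d < t * 2 ^ (-(j:ℝ)) := by
  have ht : 0 < t := h0.trans hdt
  have hP : ∃ j : ℕ, t * 2 ^ (-(j:ℝ) - 1) ≤ d := by
    obtain ⟨m, hm⟩ := pow_unbounded_of_one_lt (t / d) (by norm_num : (1:ℝ) < 2)
    refine ⟨m, ?_⟩
    have h2m : (2:ℝ) ^ (-(m:ℝ) - 1) = ((2:ℝ) ^ (m+1:ℕ))⁻¹ := by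
      rw [← Real.rpow_natCast 2 (m+1), ← Real.rpow_neg (by norm_num)]
      push_cast; ring_nf
    rw [h2m]
    rw [div_lt_iff₀ h0] at hm
    have : t < d * 2 ^ (m+1:ℕ) := by
      calc t < 2 ^ m * d := hm
        _ ≤ d * 2 ^ (m+1:ℕ) := by
            have : (2:ℝ)^m ≤ 2^(m+1:ℕ) := by
              apply pow_le_pow_right₀ (by norm_num) (by omega)
            nlinarith
    rw [mul_inv_le_iff₀ (by positivity)]
    nlinarith
  classical
  let j := Nat.find hP
  refine ⟨j, Nat.find_spec hP, ?_⟩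
  rcases Nat.eq_zero_or_pos j with hj | hj
  · rw [hj]; simpa using hdt
  · have := Nat.find_min hP (m := j - 1) (by omega)
    push_neg at this
    have hcast : -((j:ℝ) - 1) - 1 = -(j:ℝ) := by ring
    rw [Nat.cast_sub (by omega)] at this
    have h2 : (-(((j:ℝ) - (1:ℕ))) - 1) = -(j:ℝ) := by push_cast; ring
    rwa [h2] at this

/-- dyadic covering, large radii -/
lemma cover_big {ρ d : ℝ} (hρ : 0 < ρ) (h : ρ ≤ d) :
    ∃ j : ℕ, ρ * 2 ^ (j:ℝ) ≤ d ∧ d < ρ * 2 ^ ((j:ℝ) + 1) := by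
  have hP : ∃ j : ℕ, d < ρ * 2 ^ ((j:ℝ) + 1) := by
    obtain ⟨m, hm⟩ := pow_unbounded_of_one_lt (d / ρ) (by norm_num : (1:ℝ) < 2)
    refine ⟨m, ?_⟩
    rw [div_lt_iff₀ hρ] at hm
    calc d < 2 ^ m * ρ := hm
      _ ≤ ρ * 2 ^ ((m:ℝ)+1) := by
          rw [mul_comm]
          have : (2:ℝ) ^ (m:ℝ) ≤ 2 ^ ((m:ℝ)+1) := by
            apply Real.rpow_le_rpow_of_exponent_le (by norm_num); linarith
          rw [Real.rpow_natCast] at this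
          nlinarith
  classical
  let j := Nat.find hP
  refine ⟨j, ?_, Nat.find_spec hP⟩
  rcases Nat.eq_zero_or_pos j with hj | hj
  · rw [hj]; simpa using h
  · have := Nat.find_min hP (m := j - 1) (by omega)
    push_neg at this
    rw [Nat.cast_sub (by omega)] at this
    have h2 : ((j:ℝ) - (1:ℕ) + 1) = (j:ℝ) := by push_cast; ring
    rwa [h2] at this



variable {n : ℕ}

local notation "E" => EuclideanSpace ℝ (Fin n)

lemma radial_center (hn : 0 < n) {γ : ℝ} (hγ0 : 0 ≤ γ) (hγn : γ < n) :
    ∃ C : ℝ, 0 < C ∧ ∀ (w : E) (t : ℝ), 0 < t →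
      ∫⁻ y in ball w t, ENNReal.ofReal (‖y - w‖ ^ (-γ)) ∂volume
        ≤ ENNReal.ofReal (C * t ^ ((n:ℝ) - γ)) := by
  haveI : Nonempty (Fin n) := ⟨⟨0, hn⟩⟩
  set ωR : ℝ := (volume (ball (0 : E) 1)).toReal with hωR
  have hωR0 : 0 ≤ ωR := ENNReal.toReal_nonneg
  set r : ℝ := 2 ^ (γ - (n:ℝ)) with hr
  have hr0 : 0 < r := Real.rpow_pos_of_pos (by norm_num) _
  have hr1 : r < 1 := Real.rpow_lt_one_of_one_lt_of_neg (by norm_num) (by linarith)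
  have h1r : (0:ℝ) < 1 - r := by linarith
  have hinv : (0:ℝ) < (1 - r)⁻¹ := inv_pos.2 h1r
  have h2γ : (0:ℝ) < 2 ^ γ := Real.rpow_pos_of_pos (by norm_num) _
  refine ⟨2 ^ γ * ωR * (1 - r)⁻¹ + 1, by nlinarith [mul_nonneg (mul_nonneg h2γ.le hωR0) hinv.le], ?_⟩
  intro w t ht
  set A : ℕ → Set E := fun j => ball w (t * 2 ^ (-(j:ℝ))) \ ball w (t * 2 ^ (-(j:ℝ) - 1)) with hA
  have hcov : ball w t \ {w} ⊆ ⋃ j : ℕ, A j := by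
    rintro y ⟨hy, hyw⟩
    have hd : 0 < ‖y - w‖ := by
      simp only [norm_pos_iff, sub_ne_zero]
      simpa using hyw
    have hdt : ‖y - w‖ < t := by rwa [mem_ball_iff_norm] at hy
    obtain ⟨j, h1, h2⟩ := cover_small hd hdt
    refine mem_iUnion.2 ⟨j, ?_, ?_⟩
    · rwa [mem_ball_iff_norm]
    · rw [mem_ball_iff_norm]; push_neg; exact h1
  have hterm : ∀ j : ℕ, ∫⁻ y in A j, ENNReal.ofReal (‖y - w‖ ^ (-γ)) ∂volume
      ≤ ENNReal.ofReal ((2 ^ γ * ωR * t ^ ((n:ℝ) - γ)) * r ^ j) := by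
    intro j
    have h2j : (0:ℝ) < 2 ^ (-(j:ℝ)) := Real.rpow_pos_of_pos (by norm_num) _
    have h2j1 : (0:ℝ) < 2 ^ (-(j:ℝ) - 1) := Real.rpow_pos_of_pos (by norm_num) _
    have hs1 : (0:ℝ) < t * 2 ^ (-(j:ℝ) - 1) := by positivity
    have hs2 : (0:ℝ) < t * 2 ^ (-(j:ℝ)) := by positivity
    have hAmeas : MeasurableSet (A j) :=
      measurableSet_ball.diff measurableSet_ball
    calc ∫⁻ y in A j, ENNReal.ofReal (‖y - w‖ ^ (-γ)) ∂volume
        ≤ ∫⁻ _ in A j, ENNReal.ofReal ((t * 2 ^ (-(j:ℝ) - 1)) ^ (-γ)) ∂volume := by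
          refine setLIntegral_mono' hAmeas fun y hy => ?_
          refine ENNReal.ofReal_le_ofReal ?_
          have hge : t * 2 ^ (-(j:ℝ) - 1) ≤ ‖y - w‖ := by
            have := hy.2
            rw [mem_ball_iff_norm] at this
            push_neg at this
            exact this
          exact Real.rpow_le_rpow_of_nonpos hs1 hge (by linarith)
      _ = ENNReal.ofReal ((t * 2 ^ (-(j:ℝ) - 1)) ^ (-γ)) * volume (A j) :=
          setLIntegral_const _ _
      _ ≤ ENNReal.ofReal ((t * 2 ^ (-(j:ℝ) - 1)) ^ (-γ)) * volume (ball w (t * 2 ^ (-(j:ℝ)))) :=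
          mul_le_mul_right (measure_mono diff_subset) _
      _ = ENNReal.ofReal ((t * 2 ^ (-(j:ℝ) - 1)) ^ (-γ)) *
            (ENNReal.ofReal ((t * 2 ^ (-(j:ℝ))) ^ (n:ℕ)) * volume (ball (0:E) 1)) := by
          rw [Measure.addHaar_ball volume w hs2.le, finrank_euclideanSpace_fin]
      _ = ENNReal.ofReal (((t * 2 ^ (-(j:ℝ) - 1)) ^ (-γ)) * ((t * 2 ^ (-(j:ℝ))) ^ (n:ℕ) * ωR)) := by
          rw [ENNReal.ofReal_mul (by positivity), ENNReal.ofReal_mul (by positivity)]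
          congr 1
          rw [hωR, ENNReal.ofReal_toReal measure_ball_lt_top.ne]
      _ ≤ ENNReal.ofReal ((2 ^ γ * ωR * t ^ ((n:ℝ) - γ)) * r ^ j) := by
          refine ENNReal.ofReal_le_ofReal (le_of_eq ?_)
          rw [← Real.rpow_natCast (t * 2 ^ (-(j:ℝ))) n]
          rw [Real.mul_rpow ht.le h2j1.le, Real.mul_rpow ht.le h2j.le]
          rw [← Real.rpow_natCast r j, hr]
          rw [← Real.rpow_mul (by norm_num : (0:ℝ) ≤ 2), ← Real.rpow_mul (by norm_num : (0:ℝ) ≤ 2),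
              ← Real.rpow_mul (by norm_num : (0:ℝ) ≤ 2)]
          have htt : t ^ (-γ) * t ^ ((n:ℕ):ℝ) = t ^ ((n:ℝ) - γ) := by
            rw [← Real.rpow_add ht]; norm_num; ring_nf
          have h22 : (2:ℝ) ^ ((-(j:ℝ) - 1) * (-γ)) * 2 ^ (-(j:ℝ) * (n:ℕ)) =
              2 ^ γ * 2 ^ ((γ - (n:ℝ)) * (j:ℝ)) := by
            rw [← Real.rpow_add (by norm_num : (0:ℝ) < 2),
                ← Real.rpow_add (by norm_num : (0:ℝ) < 2)]
            ring_nf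
          calc t ^ (-γ) * 2 ^ ((-(j:ℝ) - 1) * (-γ)) * (t ^ ((n:ℕ):ℝ) * 2 ^ (-(j:ℝ) * (n:ℕ)) * ωR)
              = (t ^ (-γ) * t ^ ((n:ℕ):ℝ)) * (2 ^ ((-(j:ℝ) - 1) * (-γ)) * 2 ^ (-(j:ℝ) * (n:ℕ))) * ωR := by
                ring
            _ = t ^ ((n:ℝ) - γ) * (2 ^ γ * 2 ^ ((γ - (n:ℝ)) * (j:ℝ))) * ωR := by rw [htt, h22]
            _ = 2 ^ γ * ωR * t ^ ((n:ℝ) - γ) * 2 ^ ((γ - (n:ℝ)) * (j:ℝ)) := by ring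
  have hedge : (0:ℝ) ≤ 2 ^ γ * ωR * t ^ ((n:ℝ) - γ) := by positivity
  calc ∫⁻ y in ball w t, ENNReal.ofReal (‖y - w‖ ^ (-γ)) ∂volume
      = ∫⁻ y in ball w t \ {w}, ENNReal.ofReal (‖y - w‖ ^ (-γ)) ∂volume := by
        refine (setLIntegral_congr ?_).symm
        refine MeasureTheory.diff_ae_eq_self.mpr ?_
        exact measure_mono_null inter_subset_right (measure_singleton w)
    _ ≤ ∫⁻ y in ⋃ j, A j, ENNReal.ofReal (‖y - w‖ ^ (-γ)) ∂volume := lintegral_mono_set hcov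
    _ ≤ ∑' j, ∫⁻ y in A j, ENNReal.ofReal (‖y - w‖ ^ (-γ)) ∂volume := lintegral_iUnion_le _ _
    _ ≤ ∑' j : ℕ, ENNReal.ofReal ((2 ^ γ * ωR * t ^ ((n:ℝ) - γ)) * r ^ j) :=
        ENNReal.tsum_le_tsum hterm
    _ = ENNReal.ofReal (2 ^ γ * ωR * t ^ ((n:ℝ) - γ)) * ∑' j : ℕ, ENNReal.ofReal r ^ j := by
        simp_rw [ENNReal.ofReal_mul hedge, ENNReal.ofReal_pow hr0.le, ENNReal.tsum_mul_left]
    _ = ENNReal.ofReal (2 ^ γ * ωR * t ^ ((n:ℝ) - γ)) * (1 - ENNReal.ofReal r)⁻¹ := by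
        rw [ENNReal.tsum_geometric]
    _ ≤ ENNReal.ofReal ((2 ^ γ * ωR * (1 - r)⁻¹ + 1) * t ^ ((n:ℝ) - γ)) := by
        have e1 : (1 : ℝ≥0∞) - ENNReal.ofReal r = ENNReal.ofReal (1 - r) := by
          rw [ENNReal.ofReal_sub _ hr0.le, ENNReal.ofReal_one]
        rw [e1, ← ENNReal.ofReal_inv_of_pos h1r, ← ENNReal.ofReal_mul hedge]
        refine ENNReal.ofReal_le_ofReal ?_
        have ht' : (0:ℝ) ≤ t ^ ((n:ℝ) - γ) := by positivity
        nlinarith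



lemma radial_offcenter (hn : 0 < n) {γ : ℝ} (hγ0 : 0 ≤ γ) (hγn : γ < n) :
    ∃ C : ℝ, 0 < C ∧ ∀ (w z : E) (t : ℝ), 0 < t →
      ∫⁻ y in ball w t, ENNReal.ofReal (‖y - z‖ ^ (-γ)) ∂volume
        ≤ ENNReal.ofReal (C * t ^ ((n:ℝ) - γ)) := by
  haveI : Nonempty (Fin n) := ⟨⟨0, hn⟩⟩
  obtain ⟨C0, hC00, hC0⟩ := radial_center hn hγ0 hγn
  set ωR : ℝ := (volume (ball (0 : E) 1)).toReal with hωR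
  have hωR0 : 0 ≤ ωR := ENNReal.toReal_nonneg
  refine ⟨C0 + ωR, by positivity, ?_⟩
  intro w z t ht
  have hpt : ∀ y : E, ENNReal.ofReal (‖y - z‖ ^ (-γ)) ≤
      (ball z t).indicator (fun y => ENNReal.ofReal (‖y - z‖ ^ (-γ))) y
        + ENNReal.ofReal (t ^ (-γ)) := by
    intro y
    by_cases hy : y ∈ ball z t
    · rw [Set.indicator_of_mem hy]; exact le_self_add
    · rw [Set.indicator_of_notMem hy]
      rw [mem_ball_iff_norm] at hy
      push_neg at hy
      rw [zero_add]
      exact ENNReal.ofReal_le_ofReal (Real.rpow_le_rpow_of_nonpos ht hy (neg_nonpos.mpr hγ0))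
  calc ∫⁻ y in ball w t, ENNReal.ofReal (‖y - z‖ ^ (-γ)) ∂volume
      ≤ ∫⁻ y in ball w t, ((ball z t).indicator (fun y => ENNReal.ofReal (‖y - z‖ ^ (-γ))) y
          + ENNReal.ofReal (t ^ (-γ))) ∂volume := lintegral_mono hpt
    _ = (∫⁻ y in ball w t, (ball z t).indicator (fun y => ENNReal.ofReal (‖y - z‖ ^ (-γ))) y ∂volume)
          + ENNReal.ofReal (t ^ (-γ)) * volume (ball w t) := by
        rw [lintegral_add_right _ measurable_const, setLIntegral_const]
    _ ≤ (∫⁻ y, (ball z t).indicator (fun y => ENNReal.ofReal (‖y - z‖ ^ (-γ))) y ∂volume)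
          + ENNReal.ofReal (t ^ (-γ)) * volume (ball w t) := by
        gcongr
        exact Measure.restrict_le_self
    _ = (∫⁻ y in ball z t, ENNReal.ofReal (‖y - z‖ ^ (-γ)) ∂volume)
          + ENNReal.ofReal (t ^ (-γ)) * volume (ball w t) := by
        rw [lintegral_indicator measurableSet_ball]
    _ ≤ ENNReal.ofReal (C0 * t ^ ((n:ℝ) - γ)) + ENNReal.ofReal (ωR * t ^ ((n:ℝ) - γ)) := by
        gcongr
        · exact hC0 z t ht
        · rw [Measure.addHaar_ball volume w ht.le, finrank_euclideanSpace_fin,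
            show volume (ball (0:E) 1) = ENNReal.ofReal ωR from
              (ENNReal.ofReal_toReal measure_ball_lt_top.ne).symm,
            ← ENNReal.ofReal_mul (by positivity : (0:ℝ) ≤ t ^ (n:ℕ)),
            ← ENNReal.ofReal_mul (by positivity)]
          refine ENNReal.ofReal_le_ofReal (le_of_eq ?_)
          rw [← Real.rpow_natCast t n]
          have e : t ^ (-γ) * t ^ ((n:ℕ):ℝ) = t ^ ((n:ℝ) - γ) := by
            rw [← Real.rpow_add ht]; congr 1; push_cast; ring
          calc t ^ (-γ) * (t ^ ((n:ℕ):ℝ) * ωR) = (t ^ (-γ) * t ^ ((n:ℕ):ℝ)) * ωR := by ring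
            _ = ωR * t ^ ((n:ℝ) - γ) := by rw [e]; ring
    _ = ENNReal.ofReal ((C0 + ωR) * t ^ ((n:ℝ) - γ)) := by
        rw [← ENNReal.ofReal_add (by positivity) (by positivity)]
        ring_nf



lemma kernel_prod_measurable (κ : ℝ) :
    Measurable fun p : E × E => ENNReal.ofReal (‖p.1 - p.2‖ ^ κ) := by
  apply Measurable.ennreal_ofReal
  exact ((measurable_fst.sub measurable_snd).norm).pow_const κ

lemma G_measurable (μ : Measure E) [SFinite μ] (F : E → ℝ≥0∞) (hF : Measurable F) (κ : ℝ) :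
    Measurable fun y : E => ∫⁻ z, F z * ENNReal.ofReal (‖y - z‖ ^ κ) ∂μ := by
  apply Measurable.lintegral_prod_right' (f := fun p : E × E =>
    F p.2 * ENNReal.ofReal (‖p.1 - p.2‖ ^ κ))
  exact (hF.comp measurable_snd).mul (kernel_prod_measurable κ)

lemma swapG (μ : Measure E) [SFinite μ] (F : E → ℝ≥0∞) (hF : Measurable F)
    (hFt : ∀ z, F z ≠ ∞) (w : E) (t κ : ℝ) :
    ∫⁻ y in ball w t, (∫⁻ z, F z * ENNReal.ofReal (‖y - z‖ ^ κ) ∂μ) ∂μ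
      = ∫⁻ z, F z * (∫⁻ y in ball w t, ENNReal.ofReal (‖y - z‖ ^ κ) ∂μ) ∂μ := by
  rw [lintegral_lintegral_swap]
  · congr 1; ext z
    rw [lintegral_const_mul' _ _ (hFt z)]
  · exact ((hF.comp measurable_snd).mul (kernel_prod_measurable κ)).aemeasurable

lemma claimA (hn : 0 < n) {β τ : ℝ} (hβ0 : 0 < β) (hβn : β < n) (hτ0 : 0 < τ) (hτβ : τ * β < n)
    (μ : Measure E) (hμ : μ ≤ volume) [SFinite μ] :
    ∃ C : ℝ, 0 < C ∧ ∀ F : E → ℝ≥0∞, Measurable F → (∀ z, F z ≠ ∞) →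
      (∫⁻ z, F z ∂μ) ≠ ∞ → ∀ (w : E) (t : ℝ), 0 < t →
      ∫⁻ y in ball w t, (∫⁻ z, F z * ENNReal.ofReal (‖y - z‖ ^ (-β)) ∂μ) ^ τ ∂μ
        ≤ ENNReal.ofReal (C * t ^ ((n:ℝ) - τ * β)) * (∫⁻ z, F z ∂μ) ^ τ := by
  haveI : Nonempty (Fin n) := ⟨⟨0, hn⟩⟩
  set ωR : ℝ := (volume (ball (0 : E) 1)).toReal with hωR
  have hω0 : 0 < ωR := ENNReal.toReal_pos (measure_ball_pos volume 0 one_pos).ne'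
    measure_ball_lt_top.ne
  have hvol : ∀ (w : E) (t : ℝ), 0 < t → volume (ball w t) = ENNReal.ofReal (t ^ ((n:ℝ)) * ωR) := by
    intro w t ht
    rw [Measure.addHaar_ball volume w ht.le, finrank_euclideanSpace_fin,
      show volume (ball (0:E) 1) = ENNReal.ofReal ωR from
        (ENNReal.ofReal_toReal measure_ball_lt_top.ne).symm,
      ← ENNReal.ofReal_mul (by positivity), ← Real.rpow_natCast t n]
  -- kernel ball bound for measure μ
  have hkb : ∀ {γ : ℝ}, 0 ≤ γ → γ < n → ∃ C : ℝ, 0 < C ∧ ∀ (w z : E) (t : ℝ), 0 < t →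
      ∫⁻ y in ball w t, ENNReal.ofReal (‖y - z‖ ^ (-γ)) ∂μ
        ≤ ENNReal.ofReal (C * t ^ ((n:ℝ) - γ)) := by
    intro γ hγ0 hγn
    obtain ⟨C, hC0, hC⟩ := radial_offcenter hn hγ0 hγn
    refine ⟨C, hC0, fun w z t ht => ?_⟩
    refine le_trans (lintegral_mono' (Measure.restrict_mono subset_rfl hμ) le_rfl) (hC w z t ht)
  obtain ⟨C1, hC10, hK1⟩ := hkb hβ0.le hβn
  have hτβ0 : (0:ℝ) ≤ τ * β := by positivity
  obtain ⟨C2, hC20, hK2⟩ := hkb hτβ0 hτβ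
  rcases lt_trichotomy τ 1 with hτ1 | hτ1 | hτ1
  · -- case τ < 1 : Hölder with 1/τ, 1/(1-τ)
    refine ⟨C1 ^ τ * ωR ^ (1 - τ) + 1, by positivity, ?_⟩
    intro F hF hFt hΛ
    set Λ : ℝ≥0∞ := ∫⁻ z, F z ∂μ with hΛdef
    set G : E → ℝ≥0∞ := fun y => ∫⁻ z, F z * ENNReal.ofReal (‖y - z‖ ^ (-β)) ∂μ with hGdef
    have hGm : Measurable G := G_measurable μ F hF (-β)
    have hG1 : ∀ (w : E) (t : ℝ), 0 < t →
        ∫⁻ y in ball w t, G y ∂μ ≤ ENNReal.ofReal (C1 * t ^ ((n:ℝ) - β)) * Λ := by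
      intro w t ht
      rw [hGdef, swapG μ F hF hFt w t (-β)]
      calc ∫⁻ z, F z * (∫⁻ y in ball w t, ENNReal.ofReal (‖y - z‖ ^ (-β)) ∂μ) ∂μ
          ≤ ∫⁻ z, F z * ENNReal.ofReal (C1 * t ^ ((n:ℝ) - β)) ∂μ := by
            refine lintegral_mono fun z => ?_
            exact mul_le_mul_right (hK1 w z t ht) _
        _ = ENNReal.ofReal (C1 * t ^ ((n:ℝ) - β)) * Λ := by
            rw [lintegral_mul_const' _ _ ENNReal.ofReal_ne_top, mul_comm]
    intro w t ht
    have hpq : (1/τ).HolderConjugate (1/(1-τ)) := by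
      rw [Real.holderConjugate_iff]
      constructor
      · rw [lt_div_iff₀ hτ0]; linarith
      · simp only [one_div, inv_inv]; ring
    have hH := ENNReal.lintegral_mul_le_Lp_mul_Lq (μ.restrict (ball w t)) hpq
      ((hGm.pow_const τ).aemeasurable) (aemeasurable_const (b := (1:ℝ≥0∞)))
    simp only [Pi.mul_apply, mul_one, ENNReal.one_rpow] at hH
    have e1 : ∀ y, ((G y) ^ τ) ^ (1/τ) = G y := by
      intro y
      rw [← ENNReal.rpow_mul, mul_one_div, div_self hτ0.ne', ENNReal.rpow_one]
    simp only [e1] at hH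
    rw [lintegral_one, Measure.restrict_apply_univ] at hH
    have h2 : (∫⁻ y in ball w t, G y ∂μ) ^ τ ≤
        (ENNReal.ofReal (C1 * t ^ ((n:ℝ) - β)) * Λ) ^ τ :=
      ENNReal.rpow_le_rpow (hG1 w t ht) (by positivity)
    have h3 : (μ (ball w t)) ^ (1/(1/(1-τ))) ≤ (ENNReal.ofReal (t ^ ((n:ℝ)) * ωR)) ^ (1-τ) := by
      rw [one_div_one_div]
      refine ENNReal.rpow_le_rpow ?_ (by linarith)
      exact le_trans (hμ _) (le_of_eq (hvol w t ht))
    calc ∫⁻ y in ball w t, (G y) ^ τ ∂μ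
        ≤ (∫⁻ y in ball w t, G y ∂μ) ^ (1/(1/τ)) * (μ (ball w t)) ^ (1/(1/(1-τ))) := hH
      _ ≤ (ENNReal.ofReal (C1 * t ^ ((n:ℝ) - β)) * Λ) ^ τ
            * (ENNReal.ofReal (t ^ ((n:ℝ)) * ωR)) ^ (1-τ) := by
          rw [one_div_one_div]
          exact mul_le_mul' h2 h3
      _ = (ENNReal.ofReal ((C1 * t ^ ((n:ℝ) - β)) ^ τ * (t ^ ((n:ℝ)) * ωR) ^ (1-τ))) * Λ ^ τ := by
          rw [ENNReal.mul_rpow_of_nonneg _ _ hτ0.le,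
            ENNReal.ofReal_rpow_of_pos (by positivity),
            ENNReal.ofReal_rpow_of_pos (by positivity),
            mul_right_comm, ← ENNReal.ofReal_mul (by positivity)]
      _ ≤ ENNReal.ofReal ((C1 ^ τ * ωR ^ (1 - τ) + 1) * t ^ ((n:ℝ) - τ * β)) * Λ ^ τ := by
          refine mul_le_mul_left (ENNReal.ofReal_le_ofReal ?_) _
          rw [Real.mul_rpow hC10.le (by positivity), Real.mul_rpow (by positivity) hω0.le,
            ← Real.rpow_mul ht.le, ← Real.rpow_mul ht.le]
          have et : t ^ (((n:ℝ) - β) * τ) * t ^ ((n:ℝ) * (1 - τ)) = t ^ ((n:ℝ) - τ * β) := by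
            rw [← Real.rpow_add ht]; congr 1; ring
          have hpos : (0:ℝ) < t ^ ((n:ℝ) - τ * β) := by positivity
          calc C1 ^ τ * t ^ (((n:ℝ) - β) * τ) * (t ^ ((n:ℝ) * (1 - τ)) * ωR ^ (1 - τ))
              = (C1 ^ τ * ωR ^ (1 - τ)) * (t ^ (((n:ℝ) - β) * τ) * t ^ ((n:ℝ) * (1 - τ))) := by
                ring
            _ = (C1 ^ τ * ωR ^ (1 - τ)) * t ^ ((n:ℝ) - τ * β) := by rw [et]
            _ ≤ (C1 ^ τ * ωR ^ (1 - τ) + 1) * t ^ ((n:ℝ) - τ * β) := by nlinarith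
  · -- case τ = 1
    subst hτ1
    refine ⟨C1, hC10, ?_⟩
    intro F hF hFt hΛ
    set Λ : ℝ≥0∞ := ∫⁻ z, F z ∂μ with hΛdef
    set G : E → ℝ≥0∞ := fun y => ∫⁻ z, F z * ENNReal.ofReal (‖y - z‖ ^ (-β)) ∂μ with hGdef
    have hGm : Measurable G := G_measurable μ F hF (-β)
    have hG1 : ∀ (w : E) (t : ℝ), 0 < t →
        ∫⁻ y in ball w t, G y ∂μ ≤ ENNReal.ofReal (C1 * t ^ ((n:ℝ) - β)) * Λ := by
      intro w t ht
      rw [hGdef, swapG μ F hF hFt w t (-β)]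
      calc ∫⁻ z, F z * (∫⁻ y in ball w t, ENNReal.ofReal (‖y - z‖ ^ (-β)) ∂μ) ∂μ
          ≤ ∫⁻ z, F z * ENNReal.ofReal (C1 * t ^ ((n:ℝ) - β)) ∂μ := by
            refine lintegral_mono fun z => ?_
            exact mul_le_mul_right (hK1 w z t ht) _
        _ = ENNReal.ofReal (C1 * t ^ ((n:ℝ) - β)) * Λ := by
            rw [lintegral_mul_const' _ _ ENNReal.ofReal_ne_top, mul_comm]
    intro w t ht
    simpa using hG1 w t ht
  · -- case τ > 1 : Jensen via Hölder
    refine ⟨C2, hC20, ?_⟩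
    intro F hF hFt hΛ
    set Λ' : ℝ≥0∞ := ∫⁻ z, F z ∂μ with hΛdef
    set G : E → ℝ≥0∞ := fun y => ∫⁻ z, F z * ENNReal.ofReal (‖y - z‖ ^ (-β)) ∂μ with hGdef
    intro w t ht
    -- pointwise bound on G y ^ τ
    have hkpt : ∀ (y z : E), (ENNReal.ofReal (‖y - z‖ ^ (-β))) ^ τ
        = ENNReal.ofReal (‖y - z‖ ^ (-(τ * β))) := by
      intro y z
      rcases eq_or_lt_of_le (norm_nonneg (y - z)) with hs | hs
      · rw [← hs, Real.zero_rpow (by linarith : -β ≠ 0),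
          Real.zero_rpow (by nlinarith : -(τ*β) ≠ 0)]
        simp [ENNReal.zero_rpow_of_pos hτ0]
      · rw [ENNReal.ofReal_rpow_of_pos (Real.rpow_pos_of_pos hs _)]
        congr 1
        rw [← Real.rpow_mul hs.le]
        ring_nf
    have hGp : ∀ y : E, (G y) ^ τ ≤
        (∫⁻ z, F z * ENNReal.ofReal (‖y - z‖ ^ (-(τ * β))) ∂μ) * Λ' ^ (τ - 1) := by
      intro y
      have hpq : τ.HolderConjugate (τ/(τ-1)) := by
        rw [Real.holderConjugate_iff]
        constructor
        · exact hτ1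
        · rw [inv_div]; field_simp; ring
      have hH := ENNReal.lintegral_mul_le_Lp_mul_Lq μ hpq
        (f := fun z => (F z) ^ (1/τ) * ENNReal.ofReal (‖y - z‖ ^ (-β)))
        (g := fun z => (F z) ^ (1 - 1/τ))
        (((hF.pow_const _).mul ((kernel_prod_measurable (-β)).comp
          (measurable_prodMk_left.comp measurable_id))).aemeasurable)
        ((hF.pow_const _).aemeasurable)
      have hτne : τ ≠ 0 := hτ0.ne'
      have hτ1ne : τ - 1 ≠ 0 := sub_ne_zero.2 (ne_of_gt hτ1)
      have h1τle : (0:ℝ) ≤ 1 - 1/τ := by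
        rw [sub_nonneg, div_le_one hτ0]; linarith
      have hfg : (∫⁻ z, ((fun z => (F z) ^ (1/τ) * ENNReal.ofReal (‖y - z‖ ^ (-β))) *
          (fun z => (F z) ^ (1 - 1/τ))) z ∂μ) = G y := by
        refine lintegral_congr fun z => ?_
        simp only [Pi.mul_apply]
        rw [mul_right_comm, ← ENNReal.rpow_add_of_nonneg (1/τ) (1 - 1/τ) (by positivity) h1τle]
        have e : 1/τ + (1 - 1/τ) = 1 := by ring
        rw [e, ENNReal.rpow_one]
      have hfτ : (∫⁻ z, ((F z) ^ (1/τ) * ENNReal.ofReal (‖y - z‖ ^ (-β))) ^ τ ∂μ)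
          = ∫⁻ z, F z * ENNReal.ofReal (‖y - z‖ ^ (-(τ * β))) ∂μ := by
        refine lintegral_congr fun z => ?_
        rw [ENNReal.mul_rpow_of_nonneg _ _ hτ0.le, ← ENNReal.rpow_mul]
        have e : 1/τ * τ = 1 := by field_simp
        rw [e, ENNReal.rpow_one, hkpt y z]
      have hgq : (∫⁻ z, ((F z) ^ (1 - 1/τ)) ^ (τ/(τ-1)) ∂μ) = Λ' := by
        refine lintegral_congr fun z => ?_
        rw [← ENNReal.rpow_mul]
        have e : (1 - 1/τ) * (τ/(τ-1)) = 1 := by field_simp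
        rw [e, ENNReal.rpow_one]
      rw [hfg, hfτ, hgq] at hH
      have e2 : 1/(τ/(τ-1)) = (τ-1)/τ := by rw [one_div_div]
      rw [e2] at hH
      calc (G y) ^ τ ≤ ((∫⁻ z, F z * ENNReal.ofReal (‖y - z‖ ^ (-(τ * β))) ∂μ) ^ (1/τ)
            * Λ' ^ ((τ-1)/τ)) ^ τ := ENNReal.rpow_le_rpow hH hτ0.le
        _ = (∫⁻ z, F z * ENNReal.ofReal (‖y - z‖ ^ (-(τ * β))) ∂μ) * Λ' ^ (τ - 1) := by
            rw [ENNReal.mul_rpow_of_nonneg _ _ hτ0.le, ← ENNReal.rpow_mul, ← ENNReal.rpow_mul]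
            have e3 : 1/τ * τ = 1 := by field_simp
            have e4 : (τ-1)/τ * τ = τ - 1 := by field_simp
            rw [e3, e4, ENNReal.rpow_one]
    have hΛτ : Λ' * Λ' ^ (τ - 1) = Λ' ^ τ := by
      nth_rewrite 1 [← ENNReal.rpow_one Λ']
      rw [← ENNReal.rpow_add_of_nonneg 1 (τ-1) zero_le_one (by linarith)]
      congr 1; ring
    calc ∫⁻ y in ball w t, (G y) ^ τ ∂μ
        ≤ ∫⁻ y in ball w t, (∫⁻ z, F z * ENNReal.ofReal (‖y - z‖ ^ (-(τ * β))) ∂μ)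
            * Λ' ^ (τ - 1) ∂μ := lintegral_mono fun y => hGp y
      _ = (∫⁻ y in ball w t, (∫⁻ z, F z * ENNReal.ofReal (‖y - z‖ ^ (-(τ * β))) ∂μ) ∂μ)
            * Λ' ^ (τ - 1) := lintegral_mul_const' _ _
              (ENNReal.rpow_ne_top_of_nonneg (by linarith) hΛ)
      _ = (∫⁻ z, F z * (∫⁻ y in ball w t, ENNReal.ofReal (‖y - z‖ ^ (-(τ * β))) ∂μ) ∂μ)
            * Λ' ^ (τ - 1) := by rw [swapG μ F hF hFt w t (-(τ * β))]
      _ ≤ (∫⁻ z, F z * ENNReal.ofReal (C2 * t ^ ((n:ℝ) - τ * β)) ∂μ) * Λ' ^ (τ - 1) := by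
          refine mul_le_mul_left (lintegral_mono fun z => ?_) _
          exact mul_le_mul_right (hK2 w z t ht) _
      _ = ENNReal.ofReal (C2 * t ^ ((n:ℝ) - τ * β)) * (Λ' * Λ' ^ (τ - 1)) := by
          rw [lintegral_mul_const' _ _ ENNReal.ofReal_ne_top]; ring
      _ = ENNReal.ofReal (C2 * t ^ ((n:ℝ) - τ * β)) * Λ' ^ τ := by rw [hΛτ]



lemma farSum {e α' : ℝ} (he : 0 < e) (hea : e < α') (μ : Measure E) :
    ∃ C : ℝ, 0 < C ∧ ∀ (g : E → ℝ≥0∞) (P : ℝ≥0∞),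
      (∀ (x : E) (t : ℝ), 0 < t → ∫⁻ y in ball x t, g y ∂μ ≤ ENNReal.ofReal (t ^ e) * P) →
      ∀ (x : E) (ρ : ℝ), 0 < ρ →
      ∫⁻ y in (ball x ρ)ᶜ, g y * ENNReal.ofReal (‖x - y‖ ^ (-α')) ∂μ
        ≤ ENNReal.ofReal (C * ρ ^ (e - α')) * P := by
  set r : ℝ := 2 ^ (e - α') with hrdef
  have hr0 : 0 < r := Real.rpow_pos_of_pos (by norm_num) _
  have hr1 : r < 1 := Real.rpow_lt_one_of_one_lt_of_neg (by norm_num) (by linarith)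
  have h1r : (0:ℝ) < 1 - r := by linarith
  have h2e : (0:ℝ) < 2 ^ e := Real.rpow_pos_of_pos (by norm_num) _
  refine ⟨2 ^ e * (1 - r)⁻¹ + 1, by positivity, ?_⟩
  intro g P hg x ρ hρ
  set A : ℕ → Set E := fun j => ball x (ρ * 2 ^ ((j:ℝ) + 1)) \ ball x (ρ * 2 ^ ((j:ℝ))) with hA
  have hcov : (ball x ρ)ᶜ ⊆ ⋃ j : ℕ, A j := by
    intro y hy
    have hd : ρ ≤ ‖y - x‖ := by
      rw [Set.mem_compl_iff, mem_ball_iff_norm] at hy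
      push_neg at hy
      exact hy
    obtain ⟨j, h1, h2⟩ := cover_big hρ hd
    refine Set.mem_iUnion.2 ⟨j, ?_, ?_⟩
    · rwa [mem_ball_iff_norm]
    · rw [mem_ball_iff_norm]; push_neg; exact h1
  have hterm : ∀ j : ℕ, ∫⁻ y in A j, g y * ENNReal.ofReal (‖x - y‖ ^ (-α')) ∂μ
      ≤ ENNReal.ofReal ((2 ^ e * ρ ^ (e - α')) * r ^ j) * P := by
    intro j
    have h2j : (0:ℝ) < 2 ^ ((j:ℝ)) := Real.rpow_pos_of_pos (by norm_num) _
    have h2j1 : (0:ℝ) < 2 ^ ((j:ℝ)+1) := Real.rpow_pos_of_pos (by norm_num) _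
    have hs1 : (0:ℝ) < ρ * 2 ^ ((j:ℝ)) := by positivity
    have hs2 : (0:ℝ) < ρ * 2 ^ ((j:ℝ)+1) := by positivity
    have hAmeas : MeasurableSet (A j) := measurableSet_ball.diff measurableSet_ball
    calc ∫⁻ y in A j, g y * ENNReal.ofReal (‖x - y‖ ^ (-α')) ∂μ
        ≤ ∫⁻ y in A j, g y * ENNReal.ofReal ((ρ * 2 ^ ((j:ℝ))) ^ (-α')) ∂μ := by
          refine setLIntegral_mono' hAmeas fun y hy => ?_
          refine mul_le_mul_right (ENNReal.ofReal_le_ofReal ?_) _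
          have hge : ρ * 2 ^ ((j:ℝ)) ≤ ‖x - y‖ := by
            have := hy.2
            rw [mem_ball_iff_norm] at this
            push_neg at this
            rwa [norm_sub_rev]
          exact Real.rpow_le_rpow_of_nonpos hs1 hge (by linarith)
      _ = (∫⁻ y in A j, g y ∂μ) * ENNReal.ofReal ((ρ * 2 ^ ((j:ℝ))) ^ (-α')) :=
          lintegral_mul_const' _ _ ENNReal.ofReal_ne_top
      _ ≤ (∫⁻ y in ball x (ρ * 2 ^ ((j:ℝ)+1)), g y ∂μ) * ENNReal.ofReal ((ρ * 2 ^ ((j:ℝ))) ^ (-α')) := by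
          refine mul_le_mul_left (lintegral_mono_set diff_subset) _
      _ ≤ (ENNReal.ofReal ((ρ * 2 ^ ((j:ℝ)+1)) ^ e) * P) * ENNReal.ofReal ((ρ * 2 ^ ((j:ℝ))) ^ (-α')) :=
          mul_le_mul_left (hg x _ hs2) _
      _ = ENNReal.ofReal ((ρ * 2 ^ ((j:ℝ)+1)) ^ e * (ρ * 2 ^ ((j:ℝ))) ^ (-α')) * P := by
          rw [mul_right_comm, ← ENNReal.ofReal_mul (by positivity)]
      _ ≤ ENNReal.ofReal ((2 ^ e * ρ ^ (e - α')) * r ^ j) * P := by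
          refine mul_le_mul_left (ENNReal.ofReal_le_ofReal (le_of_eq ?_)) _
          rw [Real.mul_rpow hρ.le h2j1.le, Real.mul_rpow hρ.le h2j.le,
            ← Real.rpow_natCast r j, hrdef,
            ← Real.rpow_mul (by norm_num : (0:ℝ) ≤ 2),
            ← Real.rpow_mul (by norm_num : (0:ℝ) ≤ 2),
            ← Real.rpow_mul (by norm_num : (0:ℝ) ≤ 2)]
          have eρ : ρ ^ e * ρ ^ (-α') = ρ ^ (e - α') := by
            rw [← Real.rpow_add hρ]; congr 1
          have e2 : (2:ℝ) ^ (((j:ℝ)+1) * e) * 2 ^ ((j:ℝ) * (-α')) = 2 ^ e * 2 ^ ((e - α') * (j:ℝ)) := by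
            rw [← Real.rpow_add (by norm_num : (0:ℝ) < 2), ← Real.rpow_add (by norm_num : (0:ℝ) < 2)]
            congr 1; ring
          calc ρ ^ e * 2 ^ (((j:ℝ)+1) * e) * (ρ ^ (-α') * 2 ^ ((j:ℝ) * (-α')))
              = (ρ ^ e * ρ ^ (-α')) * (2 ^ (((j:ℝ)+1) * e) * 2 ^ ((j:ℝ) * (-α'))) := by ring
            _ = ρ ^ (e - α') * (2 ^ e * 2 ^ ((e - α') * (j:ℝ))) := by rw [eρ, e2]
            _ = 2 ^ e * ρ ^ (e - α') * 2 ^ ((e - α') * (j:ℝ)) := by ring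
  have hedge : (0:ℝ) ≤ 2 ^ e * ρ ^ (e - α') := by positivity
  calc ∫⁻ y in (ball x ρ)ᶜ, g y * ENNReal.ofReal (‖x - y‖ ^ (-α')) ∂μ
      ≤ ∫⁻ y in ⋃ j, A j, g y * ENNReal.ofReal (‖x - y‖ ^ (-α')) ∂μ := lintegral_mono_set hcov
    _ ≤ ∑' j, ∫⁻ y in A j, g y * ENNReal.ofReal (‖x - y‖ ^ (-α')) ∂μ := lintegral_iUnion_le _ _
    _ ≤ ∑' j : ℕ, ENNReal.ofReal ((2 ^ e * ρ ^ (e - α')) * r ^ j) * P :=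
        ENNReal.tsum_le_tsum fun j => hterm j
    _ = (ENNReal.ofReal (2 ^ e * ρ ^ (e - α')) * ∑' j : ℕ, ENNReal.ofReal r ^ j) * P := by
        have hc : ∀ j : ℕ, ENNReal.ofReal ((2 ^ e * ρ ^ (e - α')) * r ^ j) * P
            = (ENNReal.ofReal (2 ^ e * ρ ^ (e - α')) * ENNReal.ofReal r ^ j) * P := fun j => by
          rw [ENNReal.ofReal_mul hedge, ENNReal.ofReal_pow hr0.le]
        rw [tsum_congr hc, ENNReal.tsum_mul_right, ENNReal.tsum_mul_left]
    _ = (ENNReal.ofReal (2 ^ e * ρ ^ (e - α')) * (1 - ENNReal.ofReal r)⁻¹) * P := by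
        rw [ENNReal.tsum_geometric]
    _ ≤ ENNReal.ofReal ((2 ^ e * (1 - r)⁻¹ + 1) * ρ ^ (e - α')) * P := by
        refine mul_le_mul_left ?_ _
        have e1 : (1 : ℝ≥0∞) - ENNReal.ofReal r = ENNReal.ofReal (1 - r) := by
          rw [ENNReal.ofReal_sub _ hr0.le, ENNReal.ofReal_one]
        rw [e1, ← ENNReal.ofReal_inv_of_pos h1r, ← ENNReal.ofReal_mul hedge]
        refine ENNReal.ofReal_le_ofReal ?_
        have h1 : (0:ℝ) ≤ ρ ^ (e - α') := by positivity
        have h2 : (0:ℝ) ≤ (1-r)⁻¹ := by positivity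
        nlinarith



lemma pointwiseG (hn : 0 < n) {β : ℝ} (hβ0 : 0 < β) (hβn : β < n)
    (μ : Measure E) (hμ : μ ≤ volume) :
    ∃ C : ℝ, 0 < C ∧ ∀ (F : E → ℝ≥0∞) (Θ : ℝ≥0∞), Θ ≠ ∞ → (∀ᵐ z ∂μ, F z ≤ Θ) →
      ∀ (ρ : ℝ), 0 < ρ → ∀ y : E,
      (∫⁻ z, F z * ENNReal.ofReal (‖y - z‖ ^ (-β)) ∂μ)
        ≤ ENNReal.ofReal (C * ρ ^ ((n:ℝ) - β)) * Θ
          + ENNReal.ofReal (ρ ^ (-β)) * (∫⁻ z, F z ∂μ) := by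
  obtain ⟨C1, hC10, hK⟩ := radial_offcenter hn hβ0.le hβn
  refine ⟨C1, hC10, ?_⟩
  intro F Θ hΘt hFΘ ρ hρ y
  have hker : ∫⁻ z in ball y ρ, ENNReal.ofReal (‖y - z‖ ^ (-β)) ∂μ
      ≤ ENNReal.ofReal (C1 * ρ ^ ((n:ℝ) - β)) := by
    have h1 : ∫⁻ z in ball y ρ, ENNReal.ofReal (‖y - z‖ ^ (-β)) ∂μ
        ≤ ∫⁻ z in ball y ρ, ENNReal.ofReal (‖y - z‖ ^ (-β)) ∂volume :=
      lintegral_mono' (Measure.restrict_mono subset_rfl hμ) le_rfl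
    have h2 : ∫⁻ z in ball y ρ, ENNReal.ofReal (‖y - z‖ ^ (-β)) ∂volume
        = ∫⁻ z in ball y ρ, ENNReal.ofReal (‖z - y‖ ^ (-β)) ∂volume :=
      lintegral_congr fun z => by rw [norm_sub_rev]
    exact h1.trans (h2.trans_le (hK y y ρ hρ))
  calc ∫⁻ z, F z * ENNReal.ofReal (‖y - z‖ ^ (-β)) ∂μ
      = (∫⁻ z in ball y ρ, F z * ENNReal.ofReal (‖y - z‖ ^ (-β)) ∂μ)
        + ∫⁻ z in (ball y ρ)ᶜ, F z * ENNReal.ofReal (‖y - z‖ ^ (-β)) ∂μ :=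
        (lintegral_add_compl _ measurableSet_ball).symm
    _ ≤ ENNReal.ofReal (C1 * ρ ^ ((n:ℝ) - β)) * Θ
        + ENNReal.ofReal (ρ ^ (-β)) * (∫⁻ z, F z ∂μ) := by
        gcongr
        · calc ∫⁻ z in ball y ρ, F z * ENNReal.ofReal (‖y - z‖ ^ (-β)) ∂μ
              ≤ ∫⁻ z in ball y ρ, Θ * ENNReal.ofReal (‖y - z‖ ^ (-β)) ∂μ := by
                refine lintegral_mono_ae ?_
                exact (ae_restrict_of_ae (hFΘ.mono fun z hz => mul_le_mul_left hz _))
            _ = Θ * ∫⁻ z in ball y ρ, ENNReal.ofReal (‖y - z‖ ^ (-β)) ∂μ :=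
                lintegral_const_mul' _ _ hΘt
            _ ≤ Θ * ENNReal.ofReal (C1 * ρ ^ ((n:ℝ) - β)) := mul_le_mul_right hker _
            _ = ENNReal.ofReal (C1 * ρ ^ ((n:ℝ) - β)) * Θ := mul_comm _ _
        · calc ∫⁻ z in (ball y ρ)ᶜ, F z * ENNReal.ofReal (‖y - z‖ ^ (-β)) ∂μ
              ≤ ∫⁻ z in (ball y ρ)ᶜ, F z * ENNReal.ofReal (ρ ^ (-β)) ∂μ := by
                refine setLIntegral_mono' measurableSet_ball.compl fun z hz => ?_
                refine mul_le_mul_right (ENNReal.ofReal_le_ofReal ?_) _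
                have hge : ρ ≤ ‖y - z‖ := by
                  rw [Set.mem_compl_iff, mem_ball_iff_norm] at hz
                  push_neg at hz
                  rwa [norm_sub_rev]
                exact Real.rpow_le_rpow_of_nonpos hρ hge (by linarith)
            _ = (∫⁻ z in (ball y ρ)ᶜ, F z ∂μ) * ENNReal.ofReal (ρ ^ (-β)) :=
                lintegral_mul_const' _ _ ENNReal.ofReal_ne_top
            _ ≤ (∫⁻ z, F z ∂μ) * ENNReal.ofReal (ρ ^ (-β)) :=
                mul_le_mul_left (setLIntegral_le_lintegral _ _) _
            _ = ENNReal.ofReal (ρ ^ (-β)) * (∫⁻ z, F z ∂μ) := mul_comm _ _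

lemma rpow_collect (Λ Θ : ℝ≥0∞) (hΛ0 : Λ ≠ 0) (hΛt : Λ ≠ ∞) (hΘ0 : Θ ≠ 0) (hΘt : Θ ≠ ∞)
    (p q s : ℝ) : (Λ ^ p * Θ ^ q) * (Λ/Θ) ^ s = Λ ^ (p+s) * Θ ^ (q-s) := by
  have h1 : (Λ/Θ) ^ s = Λ ^ s * Θ ^ (-s) := by
    rw [div_eq_mul_inv, ENNReal.mul_rpow_of_ne_top hΛt (ENNReal.inv_ne_top.mpr hΘ0),
      ENNReal.inv_rpow, ← ENNReal.rpow_neg]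
  rw [h1]
  calc (Λ ^ p * Θ ^ q) * (Λ ^ s * Θ ^ (-s)) = (Λ ^ p * Λ ^ s) * (Θ ^ q * Θ ^ (-s)) := by ring
    _ = Λ ^ (p+s) * Θ ^ (q-s) := by
        rw [← ENNReal.rpow_add _ _ hΛ0 hΛt, ← ENNReal.rpow_add _ _ hΘ0 hΘt, sub_eq_add_neg]



/-- Pointwise estimate for the Havin–Maz'ya type nonlinear potential
`U_{a,b,σ} f = I_a ((I_b f)^σ)` on a ball. -/
theorem havin_mazya_potential_estimate (n : ℕ) (hn : 3 ≤ n) (a b σ : ℝ)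
    (ha : a ∈ Set.Ioo (0:ℝ) n) (hb : b ∈ Set.Ioo (0:ℝ) n) (hσ : σ > a / (n - b))
    (c : EuclideanSpace ℝ (Fin n)) (R : ℝ) (hR : 0 < R) :
    ∃ C > (0:ℝ), ∀ f : EuclideanSpace ℝ (Fin n) → ℝ,
      (∀ y, 0 ≤ f y) →
      MemLp f ⊤ (volume.restrict (ball c R)) →
      ∀ x ∈ ball c R,
        ∫ y in ball c R,
            (∫ z in ball c R, f z / ‖y - z‖ ^ ((n : ℝ) - b)) ^ σ / ‖x - y‖ ^ ((n : ℝ) - a) ≤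
          C * ((eLpNorm f 1 (volume.restrict (ball c R))).toReal) ^ ((a + b * σ) / n)
            * ((eLpNorm f ⊤ (volume.restrict (ball c R))).toReal) ^ ((σ * (n - b) - a) / n) := by
  have hn0 : 0 < n := by omega
  have hn' : (0:ℝ) < n := by exact_mod_cast hn0
  obtain ⟨ha0, han⟩ := ha
  obtain ⟨hb0, hbn⟩ := hb
  set μ : Measure (EuclideanSpace ℝ (Fin n)) := volume.restrict (ball c R) with hμdef
  have hβ0 : (0:ℝ) < (n:ℝ) - b := by linarith
  have hβn : (n:ℝ) - b < (n:ℝ) := by linarith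
  have hσ0 : 0 < σ := lt_trans (div_pos ha0 hβ0) hσ
  have hσ' : a/((n:ℝ)-b) < σ := hσ
  have hσβ : a < σ * ((n:ℝ) - b) := by rwa [div_lt_iff₀ hβ0] at hσ'
  set τ0 : ℝ := (max 1 (a/((n:ℝ)-b)) + (n:ℝ)/((n:ℝ)-b))/2 with hτ0def
  set τ : ℝ := min σ τ0 with hτdef
  have hab : a/((n:ℝ)-b) < (n:ℝ)/((n:ℝ)-b) := by
    rw [div_lt_div_iff_of_pos_right hβ0]; exact han
  have hτ0a : a/((n:ℝ)-b) < τ0 := by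
    have h1 : a/((n:ℝ)-b) ≤ max 1 (a/((n:ℝ)-b)) := le_max_right _ _
    rw [hτ0def]; linarith
  have hτa : a/((n:ℝ)-b) < τ := lt_min hσ' hτ0a
  have hτpos : 0 < τ := lt_of_le_of_lt (div_nonneg ha0.le hβ0.le) hτa
  have hτβa : a < τ * ((n:ℝ)-b) := by rwa [div_lt_iff₀ hβ0] at hτa
  have hτ0n : τ0 * ((n:ℝ)-b) < n := by
    have h1 : max 1 (a/((n:ℝ)-b)) < (n:ℝ)/((n:ℝ)-b) := max_lt ((one_lt_div hβ0).mpr hβn) hab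
    have h2 : τ0 < (n:ℝ)/((n:ℝ)-b) := by rw [hτ0def]; linarith
    calc τ0 * ((n:ℝ)-b) < ((n:ℝ)/((n:ℝ)-b)) * ((n:ℝ)-b) := by
          exact mul_lt_mul_of_pos_right h2 hβ0
      _ = n := div_mul_cancel₀ _ hβ0.ne'
  have hτβn : τ * ((n:ℝ)-b) < n :=
    lt_of_le_of_lt (mul_le_mul_of_nonneg_right (min_le_right _ _) hβ0.le) hτ0n
  have hστ : 0 ≤ σ - τ := sub_nonneg.2 (min_le_left _ _)
  have hμle : μ ≤ volume := Measure.restrict_le_self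
  obtain ⟨Cp, hCp0, hPoint⟩ := pointwiseG hn0 hβ0 hβn μ hμle
  obtain ⟨C3, hC30, hK3⟩ := radial_offcenter (n := n) hn0 (γ := (n:ℝ) - a)
    (by linarith) (by linarith)
  obtain ⟨CA, hCA0, hClaim⟩ := claimA hn0 hβ0 hβn hτpos hτβn μ hμle
  obtain ⟨Cf, hCf0, hFar⟩ := farSum (e := (n:ℝ) - τ*((n:ℝ)-b)) (α' := (n:ℝ) - a)
    (by linarith) (by linarith) μ
  refine ⟨((Cp+1)^σ * C3) + ((Cp+1)^(σ-τ) * Cf * CA), by positivity, ?_⟩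
  intro f hf0 hfM x hx
  -- measurable representative
  have hfm := hfM.aestronglyMeasurable
  set f' := hfm.mk f with hf'def
  have hf'SM : StronglyMeasurable f' := hfm.stronglyMeasurable_mk
  have hff' : f =ᵐ[μ] f' := hfm.ae_eq_mk
  set F : EuclideanSpace ℝ (Fin n) → ℝ≥0∞ := fun z => ENNReal.ofReal (f' z) with hFdef
  have hFmeas : Measurable F := hf'SM.measurable.ennreal_ofReal
  have hFt : ∀ z, F z ≠ ∞ := fun z => ENNReal.ofReal_ne_top
  set Λ : ℝ≥0∞ := ∫⁻ z, F z ∂μ with hΛdef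
  set Θ : ℝ≥0∞ := eLpNorm f ⊤ μ with hΘdef
  have hΘt : Θ ≠ ∞ := hfM.2.ne
  have hFΘ : ∀ᵐ z ∂μ, F z ≤ Θ := by
    have h1 : ∀ᵐ z ∂μ, (‖f z‖₊ : ℝ≥0∞) ≤ eLpNormEssSup f μ := ae_le_eLpNormEssSup
    filter_upwards [h1, hff'] with z h1z h2z
    show ENNReal.ofReal (f' z) ≤ Θ
    rw [← h2z, ← Real.enorm_eq_ofReal (hf0 z), hΘdef, eLpNorm_exponent_top]
    exact h1z
  have hμuniv : μ Set.univ ≠ ∞ := by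
    rw [hμdef, Measure.restrict_apply_univ]; exact measure_ball_lt_top.ne
  have hΛt : Λ ≠ ∞ := by
    have h1 : Λ ≤ Θ * μ Set.univ := by
      calc Λ ≤ ∫⁻ _, Θ ∂μ := lintegral_mono_ae (hFΘ.mono fun z hz => hz)
        _ = Θ * μ Set.univ := lintegral_const _
    exact ne_top_of_le_ne_top (ENNReal.mul_ne_top hΘt hμuniv) h1
  have hΛeq : eLpNorm f 1 μ = Λ := by
    rw [eLpNorm_one_eq_lintegral_enorm]
    refine lintegral_congr_ae ?_
    filter_upwards [hff'] with z hz
    rw [Real.enorm_eq_ofReal (hf0 z), hz]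
  -- inner potential, real and ennreal versions
  set gre : EuclideanSpace ℝ (Fin n) → ℝ :=
    fun y => ∫ z, f' z * ‖y - z‖ ^ (-((n:ℝ)-b)) ∂μ with hgre_def
  have hg_eq : ∀ y, (∫ z, f z / ‖y - z‖ ^ ((n:ℝ)-b) ∂μ) = gre y := by
    intro y
    refine integral_congr_ae ?_
    filter_upwards [hff'] with z hz
    rw [hz]
    rcases eq_or_lt_of_le (norm_nonneg (y - z)) with h0 | h0
    · rw [← h0, Real.zero_rpow (ne_of_gt hβ0), div_zero,
        Real.zero_rpow (ne_of_lt (by linarith : -((n:ℝ)-b) < 0)), mul_zero]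
    · rw [Real.rpow_neg (le_of_lt h0), div_eq_mul_inv]
  have hgre_nonneg : ∀ y, 0 ≤ gre y := by
    intro y
    refine integral_nonneg_of_ae ?_
    filter_upwards [hff'] with z hz
    rw [← hz]
    exact mul_nonneg (hf0 z) (Real.rpow_nonneg (norm_nonneg _) _)
  set G : EuclideanSpace ℝ (Fin n) → ℝ≥0∞ :=
    fun y => ∫⁻ z, F z * ENNReal.ofReal (‖y - z‖ ^ (-((n:ℝ)-b))) ∂μ with hGdef
  have hofg : ∀ y, ENNReal.ofReal (gre y) ≤ G y := by
    intro y
    by_cases hint : Integrable (fun z => f' z * ‖y - z‖ ^ (-((n:ℝ)-b))) μ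
    · rw [hgre_def]
      have hae : 0 ≤ᵐ[μ] fun z => f' z * ‖y - z‖ ^ (-((n:ℝ)-b)) := by
        filter_upwards [hff'] with z hz
        rw [← hz]
        exact mul_nonneg (hf0 z) (Real.rpow_nonneg (norm_nonneg _) _)
      rw [MeasureTheory.ofReal_integral_eq_lintegral_ofReal hint hae]
      refine lintegral_mono fun z => ?_
      by_cases hz : 0 ≤ f' z
      · rw [ENNReal.ofReal_mul hz]
      · push_neg at hz
        rw [ENNReal.ofReal_of_nonpos
          (mul_nonpos_of_nonpos_of_nonneg hz.le (Real.rpow_nonneg (norm_nonneg _) _))]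
        exact zero_le
    · rw [hgre_def]
      simp only [integral_undef hint, ENNReal.ofReal_zero]
      exact zero_le
  by_cases hΛ0 : Λ = 0
  · have hfz : ∀ᵐ z ∂μ, f z = 0 := by
      have h0 : ∀ᵐ z ∂μ, F z = 0 := by
        have h0' := (lintegral_eq_zero_iff hFmeas).mp (by rw [← hΛdef]; exact hΛ0)
        filter_upwards [h0'] with z hz using by simpa using hz
      filter_upwards [h0, hff'] with z h1z h2z
      have h3 : ENNReal.ofReal (f z) = 0 := by rw [h2z]; exact h1z
      exact le_antisymm (ENNReal.ofReal_eq_zero.mp h3) (hf0 z)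
    have hinner0 : ∀ y, gre y = 0 := by
      intro y
      rw [hgre_def]
      refine integral_eq_zero_of_ae ?_
      filter_upwards [hfz, hff'] with z h1z h2z
      rw [← h2z, h1z, zero_mul]
      simp
    have hzero : ∀ y : EuclideanSpace ℝ (Fin n),
        (∫ z, f z / ‖y - z‖ ^ ((n:ℝ)-b) ∂μ) ^ σ / ‖x - y‖ ^ ((n:ℝ)-a) = 0 := by
      intro y
      rw [hg_eq y, hinner0 y, Real.zero_rpow hσ0.ne', zero_div]
    have hLHS : (∫ y, (∫ z, f z / ‖y - z‖ ^ ((n:ℝ)-b) ∂μ) ^ σ / ‖x - y‖ ^ ((n:ℝ)-a) ∂μ) = 0 := by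
      simp only [hzero, integral_zero]
    rw [hLHS, hΛeq, hΛ0]
    have he1 : (0:ℝ) < (a + b*σ)/n := by positivity
    rw [ENNReal.toReal_zero, Real.zero_rpow (ne_of_gt he1)]
    simp
  -- main case
  · have hΘ0 : Θ ≠ 0 := by
      intro h0
      apply hΛ0
      have hz : ∀ᵐ z ∂μ, F z = 0 :=
        hFΘ.mono fun z hz => le_antisymm (h0 ▸ hz) zero_le
      rw [hΛdef]
      rw [lintegral_congr_ae hz]
      simp
    set X : ℝ≥0∞ := Λ/Θ with hXdef
    have hX0 : X ≠ 0 := by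
      rw [hXdef]
      simp [ENNReal.div_eq_zero_iff, hΛ0, hΘt]
    have hXt : X ≠ ∞ := (ENNReal.div_lt_top hΛt hΘ0).ne
    have hXr : 0 < X.toReal := ENNReal.toReal_pos hX0 hXt
    set ρ : ℝ := X.toReal ^ (1/(n:ℝ)) with hρdef
    have hρ0 : 0 < ρ := Real.rpow_pos_of_pos hXr _
    have hρpow : ∀ s : ℝ, ENNReal.ofReal (ρ ^ s) = X ^ (s/(n:ℝ)) := by
      intro s
      rw [hρdef, ← Real.rpow_mul hXr.le, show 1/(n:ℝ) * s = s/(n:ℝ) by ring,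
        ← ENNReal.ofReal_rpow_of_pos hXr, ENNReal.ofReal_toReal hXt]
    -- K and pointwise bound on G
    set s₁ : ℝ := ((n:ℝ)-((n:ℝ)-b))/(n:ℝ) with hs₁def
    have hs₁b : s₁ = b/(n:ℝ) := by rw [hs₁def]; ring
    set K : ℝ≥0∞ := Λ ^ s₁ * Θ ^ (1 - s₁) with hKdef
    have hXΘ : ∀ s : ℝ, X ^ s * Θ = Λ ^ s * Θ ^ (1-s) := by
      intro s
      calc X ^ s * Θ = (Λ ^ (0:ℝ) * Θ ^ (1:ℝ)) * X ^ s := by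
            rw [ENNReal.rpow_zero, ENNReal.rpow_one, one_mul, mul_comm]
        _ = Λ ^ (0+s) * Θ ^ (1-s) := rpow_collect Λ Θ hΛ0 hΛt hΘ0 hΘt 0 1 s
        _ = Λ ^ s * Θ ^ (1-s) := by rw [zero_add]
    have hXΛ : ∀ s : ℝ, X ^ s * Λ = Λ ^ (1+s) * Θ ^ (-s) := by
      intro s
      calc X ^ s * Λ = (Λ ^ (1:ℝ) * Θ ^ (0:ℝ)) * X ^ s := by
            rw [ENNReal.rpow_zero, ENNReal.rpow_one, mul_one, mul_comm]
        _ = Λ ^ (1+s) * Θ ^ (0-s) := rpow_collect Λ Θ hΛ0 hΛt hΘ0 hΘt 1 0 s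
        _ = Λ ^ (1+s) * Θ ^ (-s) := by rw [zero_sub]
    have h1s₁ : (0:ℝ) ≤ 1 - s₁ := by
      rw [hs₁b, sub_nonneg, div_le_one hn']; linarith
    have hK_t : K ≠ ⊤ := ENNReal.mul_ne_top
      (ENNReal.rpow_ne_top_of_nonneg (by rw [hs₁b]; positivity) hΛt)
      (ENNReal.rpow_ne_top_of_nonneg h1s₁ hΘt)
    have hD : ∀ y, G y ≤ ENNReal.ofReal (Cp+1) * K := by
      intro y
      refine le_trans (hPoint F Θ hΘt hFΘ ρ hρ0 y) ?_
      have h1 : ENNReal.ofReal (Cp * ρ ^ ((n:ℝ) - ((n:ℝ)-b))) * Θ = ENNReal.ofReal Cp * K := by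
        rw [ENNReal.ofReal_mul hCp0.le, hρpow, mul_assoc, hXΘ, hKdef, ← hs₁def]
      have h2 : ENNReal.ofReal (ρ ^ (-((n:ℝ)-b))) * Λ = K := by
        rw [hρpow, hXΛ, hKdef]
        have e1 : 1 + (-((n:ℝ)-b))/(n:ℝ) = s₁ := by rw [hs₁def]; field_simp; ring
        have e2 : -((-((n:ℝ)-b))/(n:ℝ)) = 1 - s₁ := by rw [hs₁def]; field_simp; ring
        rw [e1, e2]
      refine le_of_eq ?_
      calc ENNReal.ofReal (Cp * ρ ^ ((n:ℝ) - ((n:ℝ)-b))) * Θ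
            + ENNReal.ofReal (ρ ^ (-((n:ℝ)-b))) * Λ
          = ENNReal.ofReal Cp * K + K := by rw [h1, h2]
        _ = (ENNReal.ofReal Cp + 1) * K := by ring
        _ = ENNReal.ofReal (Cp+1) * K := by
            rw [ENNReal.ofReal_add hCp0.le zero_le_one, ENNReal.ofReal_one]
    have hDfin : (ENNReal.ofReal (Cp+1) * K) ≠ ⊤ :=
      ENNReal.mul_ne_top ENNReal.ofReal_ne_top hK_t
    -- near part
    have hker3 : ∫⁻ y in ball x ρ, ENNReal.ofReal (‖x - y‖ ^ (-((n:ℝ)-a))) ∂μ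
        ≤ ENNReal.ofReal (C3 * ρ ^ ((n:ℝ) - ((n:ℝ)-a))) := by
      have h1 : ∫⁻ y in ball x ρ, ENNReal.ofReal (‖x - y‖ ^ (-((n:ℝ)-a))) ∂μ
          ≤ ∫⁻ y in ball x ρ, ENNReal.ofReal (‖x - y‖ ^ (-((n:ℝ)-a))) ∂volume :=
        lintegral_mono' (Measure.restrict_mono subset_rfl hμle) le_rfl
      have h2 : ∫⁻ y in ball x ρ, ENNReal.ofReal (‖x - y‖ ^ (-((n:ℝ)-a))) ∂volume
          = ∫⁻ y in ball x ρ, ENNReal.ofReal (‖y - x‖ ^ (-((n:ℝ)-a))) ∂volume :=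
        lintegral_congr fun y => by rw [norm_sub_rev]
      exact h1.trans (h2.trans_le (hK3 x x ρ hρ0))
    have hnear : ∫⁻ y in ball x ρ, (G y)^σ * ENNReal.ofReal (‖x - y‖ ^ (-((n:ℝ)-a))) ∂μ
        ≤ ENNReal.ofReal ((Cp+1)^σ * C3) * (K^σ * X ^ (((n:ℝ) - ((n:ℝ)-a))/(n:ℝ))) := by
      calc ∫⁻ y in ball x ρ, (G y)^σ * ENNReal.ofReal (‖x - y‖ ^ (-((n:ℝ)-a))) ∂μ
          ≤ ∫⁻ y in ball x ρ, (ENNReal.ofReal (Cp+1) * K)^σ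
              * ENNReal.ofReal (‖x - y‖ ^ (-((n:ℝ)-a))) ∂μ := by
            refine setLIntegral_mono' measurableSet_ball fun y _ => ?_
            exact mul_le_mul_left (ENNReal.rpow_le_rpow (hD y) hσ0.le) _
        _ = (ENNReal.ofReal (Cp+1) * K)^σ
              * ∫⁻ y in ball x ρ, ENNReal.ofReal (‖x - y‖ ^ (-((n:ℝ)-a))) ∂μ :=
            lintegral_const_mul' _ _ (ENNReal.rpow_ne_top_of_nonneg hσ0.le hDfin)
        _ ≤ (ENNReal.ofReal (Cp+1) * K)^σ * ENNReal.ofReal (C3 * ρ ^ ((n:ℝ) - ((n:ℝ)-a))) :=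
            mul_le_mul_right hker3 _
        _ = ENNReal.ofReal ((Cp+1)^σ * C3) * (K^σ * X ^ (((n:ℝ) - ((n:ℝ)-a))/(n:ℝ))) := by
            rw [ENNReal.mul_rpow_of_nonneg _ _ hσ0.le,
              ENNReal.ofReal_rpow_of_pos (by positivity),
              ENNReal.ofReal_mul hC30.le, hρpow,
              ENNReal.ofReal_mul (by positivity : (0:ℝ) ≤ (Cp+1)^σ)]
            ring
    -- far part
    have hgτ : ∀ (w : EuclideanSpace ℝ (Fin n)) (t : ℝ), 0 < t →
        ∫⁻ y in ball w t, (fun y => (G y)^τ) y ∂μ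
          ≤ ENNReal.ofReal (t ^ ((n:ℝ) - τ*((n:ℝ)-b))) * (ENNReal.ofReal CA * Λ^τ) := by
      intro w t ht
      have h1 := hClaim F hFmeas hFt (by rw [← hΛdef]; exact hΛt) w t ht
      refine le_trans h1 (le_of_eq ?_)
      rw [ENNReal.ofReal_mul hCA0.le]
      ring
    have hfar : ∫⁻ y in (ball x ρ)ᶜ, (G y)^σ * ENNReal.ofReal (‖x - y‖ ^ (-((n:ℝ)-a))) ∂μ
        ≤ ENNReal.ofReal ((Cp+1)^(σ-τ) * Cf * CA) *
          ((K^(σ-τ) * X ^ (((n:ℝ) - τ*((n:ℝ)-b) - ((n:ℝ)-a))/(n:ℝ))) * Λ^τ) := by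
      have hpt : ∀ y, (G y)^σ * ENNReal.ofReal (‖x - y‖ ^ (-((n:ℝ)-a)))
          ≤ (ENNReal.ofReal (Cp+1) * K)^(σ-τ)
            * ((G y)^τ * ENNReal.ofReal (‖x - y‖ ^ (-((n:ℝ)-a)))) := by
        intro y
        have h1 : (G y)^σ = (G y)^(σ-τ) * (G y)^τ := by
          rw [← ENNReal.rpow_add_of_nonneg _ _ hστ hτpos.le, sub_add_cancel]
        rw [h1, mul_assoc]
        exact mul_le_mul_left (ENNReal.rpow_le_rpow (hD y) hστ) _
      calc ∫⁻ y in (ball x ρ)ᶜ, (G y)^σ * ENNReal.ofReal (‖x - y‖ ^ (-((n:ℝ)-a))) ∂μ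
          ≤ ∫⁻ y in (ball x ρ)ᶜ, (ENNReal.ofReal (Cp+1) * K)^(σ-τ)
              * ((G y)^τ * ENNReal.ofReal (‖x - y‖ ^ (-((n:ℝ)-a)))) ∂μ :=
            setLIntegral_mono' measurableSet_ball.compl fun y _ => hpt y
        _ = (ENNReal.ofReal (Cp+1) * K)^(σ-τ)
              * ∫⁻ y in (ball x ρ)ᶜ, (G y)^τ * ENNReal.ofReal (‖x - y‖ ^ (-((n:ℝ)-a))) ∂μ :=
            lintegral_const_mul' _ _ (ENNReal.rpow_ne_top_of_nonneg hστ hDfin)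
        _ ≤ (ENNReal.ofReal (Cp+1) * K)^(σ-τ)
              * (ENNReal.ofReal (Cf * ρ ^ ((n:ℝ) - τ*((n:ℝ)-b) - ((n:ℝ)-a)))
                * (ENNReal.ofReal CA * Λ^τ)) :=
            mul_le_mul_right (hFar (fun y => (G y)^τ) _ hgτ x ρ hρ0) _
        _ = ENNReal.ofReal ((Cp+1)^(σ-τ) * Cf * CA) *
              ((K^(σ-τ) * X ^ (((n:ℝ) - τ*((n:ℝ)-b) - ((n:ℝ)-a))/(n:ℝ))) * Λ^τ) := by
            rw [ENNReal.mul_rpow_of_nonneg _ _ hστ,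
              ENNReal.ofReal_rpow_of_pos (by positivity),
              ENNReal.ofReal_mul hCf0.le, hρpow,
              ENNReal.ofReal_mul (by positivity : (0:ℝ) ≤ (Cp+1)^(σ-τ) * Cf),
              ENNReal.ofReal_mul (by positivity : (0:ℝ) ≤ (Cp+1)^(σ-τ))]
            ring
    -- identify with target T
    set T : ℝ≥0∞ := Λ ^ ((a + b*σ)/(n:ℝ)) * Θ ^ ((σ*((n:ℝ)-b) - a)/(n:ℝ)) with hTdef
    have hT1 : K^σ * X ^ (((n:ℝ) - ((n:ℝ)-a))/(n:ℝ)) = T := by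
      rw [hKdef, ENNReal.mul_rpow_of_nonneg _ _ hσ0.le, ← ENNReal.rpow_mul, ← ENNReal.rpow_mul,
        rpow_collect Λ Θ hΛ0 hΛt hΘ0 hΘt (s₁*σ) ((1-s₁)*σ) _, hTdef]
      congr 1
      · congr 1
        rw [hs₁b]; field_simp; ring
      · congr 1
        rw [hs₁b]; field_simp; ring
    have hT2 : (K^(σ-τ) * X ^ (((n:ℝ) - τ*((n:ℝ)-b) - ((n:ℝ)-a))/(n:ℝ))) * Λ^τ = T := by
      rw [hKdef, ENNReal.mul_rpow_of_nonneg _ _ hστ, ← ENNReal.rpow_mul, ← ENNReal.rpow_mul,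
        rpow_collect Λ Θ hΛ0 hΛt hΘ0 hΘt (s₁*(σ-τ)) ((1-s₁)*(σ-τ)) _,
        mul_right_comm, ← ENNReal.rpow_add _ _ hΛ0 hΛt, hTdef]
      congr 1
      · congr 1
        rw [hs₁b]; field_simp; ring
      · congr 1
        rw [hs₁b]; field_simp; ring
    -- total bound
    have hV : ∫⁻ y, (G y)^σ * ENNReal.ofReal (‖x - y‖ ^ (-((n:ℝ)-a))) ∂μ
        ≤ ENNReal.ofReal ((Cp+1)^σ * C3 + (Cp+1)^(σ-τ) * Cf * CA) * T := by
      rw [← lintegral_add_compl (fun y => (G y)^σ * ENNReal.ofReal (‖x - y‖ ^ (-((n:ℝ)-a))))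
        (measurableSet_ball : MeasurableSet (ball x ρ))]
      calc (∫⁻ y in ball x ρ, (G y)^σ * ENNReal.ofReal (‖x - y‖ ^ (-((n:ℝ)-a))) ∂μ)
            + ∫⁻ y in (ball x ρ)ᶜ, (G y)^σ * ENNReal.ofReal (‖x - y‖ ^ (-((n:ℝ)-a))) ∂μ
          ≤ ENNReal.ofReal ((Cp+1)^σ * C3) * (K^σ * X ^ (((n:ℝ) - ((n:ℝ)-a))/(n:ℝ)))
            + ENNReal.ofReal ((Cp+1)^(σ-τ) * Cf * CA) *
              ((K^(σ-τ) * X ^ (((n:ℝ) - τ*((n:ℝ)-b) - ((n:ℝ)-a))/(n:ℝ))) * Λ^τ) :=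
            add_le_add hnear hfar
        _ = ENNReal.ofReal ((Cp+1)^σ * C3 + (Cp+1)^(σ-τ) * Cf * CA) * T := by
            rw [hT1, hT2, ← add_mul, ← ENNReal.ofReal_add (by positivity) (by positivity)]
    -- Bochner → lintegral
    have hgreM : StronglyMeasurable gre := by
      apply StronglyMeasurable.integral_prod_right
        (f := fun (y z : EuclideanSpace ℝ (Fin n)) => f' z * ‖y - z‖ ^ (-((n:ℝ)-b)))
      apply Measurable.stronglyMeasurable
      exact (hf'SM.measurable.comp measurable_snd).mul
        (((measurable_fst.sub measurable_snd).norm).pow_const _)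
    have hmeas_h : AEStronglyMeasurable
        (fun y => (gre y)^σ / ‖x - y‖ ^ ((n:ℝ)-a)) μ := by
      apply Measurable.aestronglyMeasurable
      exact (hgreM.measurable.pow_const σ).div
        (((measurable_const.sub measurable_id).norm).pow_const _)
    have hconv : (∫ y, (∫ z, f z / ‖y - z‖ ^ ((n:ℝ)-b) ∂μ) ^ σ / ‖x - y‖ ^ ((n:ℝ)-a) ∂μ)
        = (∫⁻ y, ENNReal.ofReal ((gre y)^σ / ‖x - y‖ ^ ((n:ℝ)-a)) ∂μ).toReal := by
      simp only [hg_eq]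
      exact integral_eq_lintegral_of_nonneg_ae
        (ae_of_all _ fun y => div_nonneg (Real.rpow_nonneg (hgre_nonneg y) σ)
          (Real.rpow_nonneg (norm_nonneg _) _)) hmeas_h
    have hptw : ∀ y, ENNReal.ofReal ((gre y)^σ / ‖x - y‖ ^ ((n:ℝ)-a))
        ≤ (G y)^σ * ENNReal.ofReal (‖x - y‖ ^ (-((n:ℝ)-a))) := by
      intro y
      rw [div_eq_mul_inv, ← Real.rpow_neg (norm_nonneg _),
        ENNReal.ofReal_mul (Real.rpow_nonneg (hgre_nonneg y) σ)]
      refine mul_le_mul_left ?_ _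
      have h1 : ENNReal.ofReal ((gre y)^σ) = (ENNReal.ofReal (gre y))^σ := by
        rcases eq_or_lt_of_le (hgre_nonneg y) with h0 | h0
        · rw [← h0, Real.zero_rpow hσ0.ne']
          simp [ENNReal.zero_rpow_of_pos hσ0]
        · rw [ENNReal.ofReal_rpow_of_pos h0]
      rw [h1]
      exact ENNReal.rpow_le_rpow (hofg y) hσ0.le
    have he1 : (0:ℝ) ≤ (a + b*σ)/(n:ℝ) := by positivity
    have he2 : (0:ℝ) ≤ (σ*((n:ℝ)-b) - a)/(n:ℝ) := by
      apply div_nonneg _ hn'.le; linarith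
    have hT_t : T ≠ ⊤ := ENNReal.mul_ne_top
      (ENNReal.rpow_ne_top_of_nonneg he1 hΛt) (ENNReal.rpow_ne_top_of_nonneg he2 hΘt)
    rw [hconv, hΛeq]
    have hle2 : (∫⁻ y, ENNReal.ofReal ((gre y)^σ / ‖x - y‖ ^ ((n:ℝ)-a)) ∂μ)
        ≤ ENNReal.ofReal ((Cp+1)^σ * C3 + (Cp+1)^(σ-τ) * Cf * CA) * T :=
      le_trans (lintegral_mono hptw) hV
    calc (∫⁻ y, ENNReal.ofReal ((gre y)^σ / ‖x - y‖ ^ ((n:ℝ)-a)) ∂μ).toReal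
        ≤ (ENNReal.ofReal ((Cp+1)^σ * C3 + (Cp+1)^(σ-τ) * Cf * CA) * T).toReal :=
          ENNReal.toReal_mono (ENNReal.mul_ne_top ENNReal.ofReal_ne_top hT_t) hle2
      _ = ((Cp+1)^σ * C3 + (Cp+1)^(σ-τ) * Cf * CA) * Λ.toReal ^ ((a + b*σ)/(n:ℝ))
            * Θ.toReal ^ ((σ*((n:ℝ)-b) - a)/(n:ℝ)) := by
          rw [ENNReal.toReal_mul, hTdef, ENNReal.toReal_mul,
            ENNReal.toReal_ofReal (by positivity), ← ENNReal.toReal_rpow,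
            ← ENNReal.toReal_rpow]
          ring

end
end

section
/- Let $n \ge 3$, $\alpha \in (0,n)$, $\gamma \ge 0$, and let $v \in L^1(B_1(0))$ be nonnegative with $v(x) = \mathcal{O}(|x|^{-\gamma})$ as $x \to 0$. Then $\int_{|y|<1} \frac{v(y)\,dy}{|x-y|^{\alpha}} = \mathcal{O}(|x|^{-\alpha}) + o\big(|x|^{-\gamma\alpha/n}\big)$ as $x \to 0$, i.e.\ there exist $C > 0$ and a function $\varepsilon(x) \to 0$ as $x \to 0$ such that $\int_{|y|<1} \frac{v(y)\,dy}{|x-y|^{\alpha}} \le C|x|^{-\alpha} + \varepsilon(x)|x|^{-\gamma\alpha/n}$ near $0$. -/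
open MeasureTheory Metric Filter Topology
open scoped ENNReal

noncomputable section

set_option maxHeartbeats 1000000

lemma rexp_rpow (x y : ℝ) : (Real.exp x) ^ y = Real.exp (x * y) := by
  rw [Real.rpow_def_of_pos (Real.exp_pos x), Real.log_exp]

lemma rexp_npow (x : ℝ) (k : ℕ) : (Real.exp x) ^ k = Real.exp (k * x) := by
  rw [Real.exp_nat_mul]

lemma lintegral_ball_rpow_neg_le (n : ℕ) (hn : 1 ≤ n) (α : ℝ) (hα0 : 0 < α) (hαn : α < n) :
    ∃ K > (0:ℝ), ∀ t : ℝ, 0 < t →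
      ∫⁻ z in ball (0 : EuclideanSpace ℝ (Fin n)) t, ENNReal.ofReal (‖z‖ ^ (-α)) ≤
        ENNReal.ofReal (K * t ^ ((n:ℝ) - α)) := by
  haveI : Nonempty (Fin n) := ⟨⟨0, by omega⟩⟩
  set E := EuclideanSpace ℝ (Fin n)
  set V₁ : ℝ≥0∞ := volume (ball (0:E) 1) with hV₁def
  have hV₁ : V₁ ≠ ⊤ := measure_ball_lt_top.ne
  set L2 : ℝ := Real.log 2 with hL2def
  have h2e : (2:ℝ) = Real.exp L2 := (Real.exp_log (by norm_num)).symm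
  have hhe : (1/2:ℝ) = Real.exp (-L2) := by
    rw [Real.exp_neg, ← h2e]; norm_num
  set q : ℝ := Real.exp (α * L2 - n * L2) with hqdef
  have hq0 : 0 < q := Real.exp_pos _
  have hq1 : q < 1 := by
    rw [hqdef, Real.exp_lt_one_iff]
    have hL2pos : 0 < L2 := Real.log_pos (by norm_num)
    nlinarith
  have hoq1 : ENNReal.ofReal q < 1 := by
    rw [← ENNReal.ofReal_one]
    exact ENNReal.ofReal_lt_ofReal_iff_of_nonneg hq0.le |>.2 hq1
  set W : ℝ≥0∞ := V₁ * (1 - ENNReal.ofReal q)⁻¹ with hWdef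
  have hW : W ≠ ⊤ := by
    apply ENNReal.mul_ne_top hV₁
    rw [Ne, ENNReal.inv_eq_top, tsub_eq_zero_iff_le]
    exact fun h => absurd (lt_of_lt_of_le hoq1 h) (lt_irrefl _)
  refine ⟨(2:ℝ)^α * (W.toReal + 1), by positivity, fun t ht => ?_⟩
  -- annuli
  set A : ℕ → Set E := fun k => ball 0 (t * (1/2)^k) \ ball 0 (t * (1/2)^(k+1)) with hAdef
  have hcov : ball (0:E) t ⊆ {0} ∪ ⋃ k : ℕ, A k := by
    intro z hz
    rcases eq_or_ne z 0 with rfl | hz0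
    · exact Set.mem_union_left _ rfl
    · have hz' : 0 < ‖z‖ := norm_pos_iff.2 hz0
      have hzt : ‖z‖ < t := by simpa [mem_ball, dist_eq_norm] using hz
      have hex : ∃ k : ℕ, t * (1/2:ℝ)^(k+1) ≤ ‖z‖ := by
        obtain ⟨k, hk⟩ := exists_pow_lt_of_lt_one (div_pos hz' ht) (by norm_num : (1/2:ℝ) < 1)
        refine ⟨k, ?_⟩
        have h1 : ((1/2:ℝ))^(k+1) ≤ (1/2:ℝ)^k := by
          apply pow_le_pow_of_le_one (by norm_num) (by norm_num); omega
        have := (lt_div_iff₀ ht).1 hk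
        nlinarith
      set k := Nat.find hex with hkdef
      have hk1 : t * (1/2:ℝ)^(k+1) ≤ ‖z‖ := Nat.find_spec hex
      have hk2 : ‖z‖ < t * (1/2:ℝ)^k := by
        rcases Nat.eq_zero_or_pos k with hk0 | hk0
        · rw [hk0]; simpa using hzt
        · have := Nat.find_min hex (show k - 1 < k by omega)
          push_neg at this
          have hk' : k - 1 + 1 = k := by omega
          rwa [hk'] at this
      refine Set.mem_union_right _ (Set.mem_iUnion.2 ⟨k, ?_, ?_⟩)
      · simpa [mem_ball, dist_eq_norm] using hk2
      · simpa [mem_ball, dist_eq_norm, not_lt] using hk1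
  have hA_bound : ∀ k : ℕ, ∫⁻ z in A k, ENNReal.ofReal (‖z‖ ^ (-α)) ≤
      ENNReal.ofReal ((2:ℝ)^α * t ^ ((n:ℝ) - α)) * ENNReal.ofReal (q^k) * V₁ := by
    intro k
    have hrad : (0:ℝ) < t * (1/2)^(k+1) := by positivity
    have hstep : ∫⁻ z in A k, ENNReal.ofReal (‖z‖ ^ (-α)) ≤
        ∫⁻ _z in A k, ENNReal.ofReal ((t * (1/2:ℝ)^(k+1)) ^ (-α)) := by
      apply setLIntegral_mono' (measurableSet_ball.diff measurableSet_ball)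
      intro z hz
      apply ENNReal.ofReal_le_ofReal
      apply Real.rpow_le_rpow_of_nonpos hrad _ (neg_nonpos.2 hα0.le)
      have := hz.2
      simpa [mem_ball, dist_eq_norm, not_lt] using this
    have hvol : volume (A k) ≤ ENNReal.ofReal ((t * (1/2:ℝ)^k) ^ n) * V₁ := by
      calc volume (A k) ≤ volume (ball (0:E) (t * (1/2)^k)) := measure_mono Set.diff_subset
      _ = ENNReal.ofReal ((t * (1/2:ℝ)^k) ^ Module.finrank ℝ E) * V₁ :=
          Measure.addHaar_ball _ _ (by positivity)
      _ = ENNReal.ofReal ((t * (1/2:ℝ)^k) ^ n) * V₁ := by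
          rw [show Module.finrank ℝ E = n from finrank_euclideanSpace_fin]
    calc ∫⁻ z in A k, ENNReal.ofReal (‖z‖ ^ (-α))
        ≤ ENNReal.ofReal ((t * (1/2:ℝ)^(k+1)) ^ (-α)) * volume (A k) := by
          rw [← setLIntegral_const]
          exact hstep
      _ ≤ ENNReal.ofReal ((t * (1/2:ℝ)^(k+1)) ^ (-α)) *
            (ENNReal.ofReal ((t * (1/2:ℝ)^k) ^ n) * V₁) := by
          exact mul_le_mul_right hvol _
      _ = ENNReal.ofReal ((t * (1/2:ℝ)^(k+1)) ^ (-α) * (t * (1/2:ℝ)^k) ^ n) * V₁ := by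
          rw [ENNReal.ofReal_mul (by positivity), mul_assoc]
      _ = ENNReal.ofReal ((2:ℝ)^α * t ^ ((n:ℝ) - α)) * ENNReal.ofReal (q^k) * V₁ := by
          congr 1
          rw [← ENNReal.ofReal_mul (by positivity)]
          congr 1
          have hte : t = Real.exp (Real.log t) := (Real.exp_log ht).symm
          rw [hqdef, hte, hhe, h2e]
          simp only [rexp_npow, rexp_rpow, ← Real.exp_add]
          rw [Real.exp_eq_exp]
          push_cast
          ring
  calc ∫⁻ z in ball (0:E) t, ENNReal.ofReal (‖z‖ ^ (-α))
      ≤ ∫⁻ z in ({0} ∪ ⋃ k : ℕ, A k), ENNReal.ofReal (‖z‖ ^ (-α)) := lintegral_mono_set hcov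
    _ ≤ (∫⁻ z in ({0} : Set E), ENNReal.ofReal (‖z‖ ^ (-α))) +
          ∫⁻ z in (⋃ k : ℕ, A k), ENNReal.ofReal (‖z‖ ^ (-α)) := lintegral_union_le _ _ _
    _ ≤ 0 + ∑' k : ℕ, ∫⁻ z in A k, ENNReal.ofReal (‖z‖ ^ (-α)) :=
        add_le_add (le_of_eq (setLIntegral_measure_zero _ _ (measure_singleton 0)))
          (lintegral_iUnion_le _ _)
    _ ≤ ∑' k : ℕ, ENNReal.ofReal ((2:ℝ)^α * t ^ ((n:ℝ) - α)) * ENNReal.ofReal (q^k) * V₁ := by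
        rw [zero_add]; exact ENNReal.tsum_le_tsum hA_bound
    _ = ENNReal.ofReal ((2:ℝ)^α * t ^ ((n:ℝ) - α)) * W := by
        simp_rw [mul_comm _ V₁, ← mul_assoc, ENNReal.tsum_mul_left, hWdef]
        rw [mul_comm V₁, mul_assoc]
        congr 1
        rw [mul_comm V₁, mul_comm _ V₁]
        congr 1
        simp_rw [ENNReal.ofReal_pow hq0.le]
        exact ENNReal.tsum_geometric _
    _ ≤ ENNReal.ofReal ((2:ℝ)^α * t ^ ((n:ℝ) - α)) * ENNReal.ofReal (W.toReal + 1) := by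
        gcongr
        exact le_trans (le_of_eq (ENNReal.ofReal_toReal hW).symm)
          (ENNReal.ofReal_le_ofReal (by linarith))
    _ ≤ ENNReal.ofReal ((2:ℝ)^α * (W.toReal + 1) * t ^ ((n:ℝ) - α)) := by
        rw [← ENNReal.ofReal_mul (by positivity)]
        apply ENNReal.ofReal_le_ofReal
        ring_nf
        exact le_refl _

lemma lintegral_ball_sub_eq (n : ℕ) (x : EuclideanSpace ℝ (Fin n)) (t α : ℝ) :
    ∫⁻ y in ball x t, ENNReal.ofReal (‖x - y‖ ^ (-α)) =
      ∫⁻ z in ball (0 : EuclideanSpace ℝ (Fin n)) t, ENNReal.ofReal (‖z‖ ^ (-α)) := by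
  have hf : Measurable fun z : EuclideanSpace ℝ (Fin n) => ENNReal.ofReal (‖z‖ ^ (-α)) :=
    (measurable_norm.pow_const _).ennreal_ofReal
  have hpre : (fun y => x - y) ⁻¹' ball (0 : EuclideanSpace ℝ (Fin n)) t = ball x t := by
    ext y
    simp [mem_ball, dist_eq_norm, norm_sub_rev]
  rw [← hpre]
  exact (Measure.measurePreserving_sub_left volume x).setLIntegral_comp_preimage
    measurableSet_ball hf

/-- If `v ∈ L¹(B₁(0))` is nonnegative with `v(x) = O(|x|^{-γ})` as `x → 0`, then
`∫_{|y|<1} v(y)/|x-y|^α dy = O(|x|^{-α}) + o(|x|^{-γα/n})` as `x → 0`. -/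
theorem riesz_potential_O_little_o (n : ℕ) (hn : 3 ≤ n) (α γ : ℝ)
    (hα : α ∈ Set.Ioo (0:ℝ) n) (hγ : 0 ≤ γ)
    (v : EuclideanSpace ℝ (Fin n) → ℝ)
    (hv1 : IntegrableOn v (ball (0 : EuclideanSpace ℝ (Fin n)) 1))
    (hv0 : ∀ y, 0 ≤ v y)
    (hO : ∃ C₀ > (0:ℝ), ∃ ρ ∈ Set.Ioo (0:ℝ) 1,
      ∀ x : EuclideanSpace ℝ (Fin n), 0 < ‖x‖ → ‖x‖ < ρ → v x ≤ C₀ * ‖x‖ ^ (-γ)) :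
    ∃ C > (0:ℝ), ∃ ε : EuclideanSpace ℝ (Fin n) → ℝ,
      Tendsto ε (𝓝[≠] (0 : EuclideanSpace ℝ (Fin n))) (𝓝 0) ∧
      ∃ ρ ∈ Set.Ioo (0:ℝ) 1,
        ∀ x : EuclideanSpace ℝ (Fin n), 0 < ‖x‖ → ‖x‖ < ρ →
          ∫ y in ball (0 : EuclideanSpace ℝ (Fin n)) 1, v y / ‖x - y‖ ^ α ≤
            C * ‖x‖ ^ (-α) + ε x * ‖x‖ ^ (-(γ * α / n)) := by
  haveI : Nonempty (Fin n) := ⟨⟨0, by omega⟩⟩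
  obtain ⟨hα0, hαn⟩ := hα
  obtain ⟨C₀, hC₀, ρ₀, hρ₀, hvbound⟩ := hO
  have hn0 : (0:ℝ) < n := by positivity
  have hnα : (0:ℝ) < (n:ℝ) - α := by linarith
  obtain ⟨K, hK0, hK⟩ := lintegral_ball_rpow_neg_le n (by omega) α hα0 hαn
  -- basic data
  set V : ℝ := ∫ y in ball (0:EuclideanSpace ℝ (Fin n)) 1, v y with hVdef
  have hV0 : 0 ≤ V := setIntegral_nonneg measurableSet_ball fun y _ => hv0 y
  set C₁ : ℝ := C₀ * 2 ^ γ with hC₁def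
  have hC₁0 : 0 < C₁ := by positivity
  set p : ℝ := ((n:ℝ) - α) / n with hpdef
  have hp0 : 0 < p := by positivity
  set m : EuclideanSpace ℝ (Fin n) → ℝ := fun z => ∫ y in ball (0:EuclideanSpace ℝ (Fin n)) (Real.sqrt ‖z‖), v y with hmdef
  set ε : EuclideanSpace ℝ (Fin n) → ℝ := fun z => (C₁ * K + 1) * (m z + ‖z‖) ^ p with hεdef
  set C : ℝ := 2 ^ α * (V + 1) + 2 ^ α * V + 1 with hCdef
  have hC : 0 < C := by positivity
  have hae0 : ∀ s : Set (EuclideanSpace ℝ (Fin n)), ∀ᵐ y ∂(volume.restrict s), y ≠ (0:EuclideanSpace ℝ (Fin n)) := by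
    intro s
    refine ae_iff.2 ?_
    have hsub : {y : EuclideanSpace ℝ (Fin n) | ¬ y ≠ 0} ⊆ {(0:EuclideanSpace ℝ (Fin n))} := fun y hy => by simpa using hy
    refine measure_mono_null hsub ?_
    exact le_antisymm ((Measure.restrict_apply_le _ _).trans
      (le_of_eq (measure_singleton 0))) zero_le
  -- tendsto of ε
  have hnormt : Tendsto (fun x : EuclideanSpace ℝ (Fin n) => ‖x‖) (𝓝[≠] (0:EuclideanSpace ℝ (Fin n))) (𝓝 0) := by
    have h : Tendsto (fun x : EuclideanSpace ℝ (Fin n) => ‖x‖)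
        (𝓝[≠] (0:EuclideanSpace ℝ (Fin n))) (𝓝 ‖(0:EuclideanSpace ℝ (Fin n))‖) :=
      (continuous_norm.tendsto (0:EuclideanSpace ℝ (Fin n))).mono_left nhdsWithin_le_nhds
    simpa using h
  have hmt : Tendsto m (𝓝[≠] (0:EuclideanSpace ℝ (Fin n))) (𝓝 0) := by
    have key : Tendsto
        (fun x : EuclideanSpace ℝ (Fin n) => ∫ y in ball (0:EuclideanSpace ℝ (Fin n)) 1, (ball (0:EuclideanSpace ℝ (Fin n)) (Real.sqrt ‖x‖)).indicator v y)
        (𝓝[≠] (0:EuclideanSpace ℝ (Fin n))) (𝓝 0) := by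
      have h0 : (0:ℝ) = ∫ y in ball (0:EuclideanSpace ℝ (Fin n)) 1, (0:ℝ) := by simp
      rw [h0]
      apply tendsto_integral_filter_of_dominated_convergence (bound := fun y => |v y|)
      · exact Eventually.of_forall fun x =>
          (hv1.aestronglyMeasurable).indicator measurableSet_ball
      · exact Eventually.of_forall fun x => Eventually.of_forall fun y => by
          simpa [Real.norm_eq_abs] using norm_indicator_le_norm_self v y
      · exact hv1.abs
      · filter_upwards [hae0 (ball (0:EuclideanSpace ℝ (Fin n)) 1)] with y hy
        have hy2 : (0:ℝ) < ‖y‖ ^ 2 := by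
          have : 0 < ‖y‖ := norm_pos_iff.2 hy
          positivity
        apply Tendsto.congr' _ tendsto_const_nhds
        filter_upwards [hnormt.eventually (gt_mem_nhds hy2)] with x hx
        symm
        apply Set.indicator_of_notMem
        intro hmem
        have h1 : ‖y‖ < Real.sqrt ‖x‖ := by
          simpa [mem_ball, dist_eq_norm] using hmem
        have h2 : Real.sqrt ‖x‖ < ‖y‖ := by
          have := Real.sqrt_lt_sqrt (norm_nonneg x) hx
          rwa [Real.sqrt_sq (norm_nonneg y)] at this
        linarith
    apply key.congr'
    filter_upwards [hnormt.eventually (gt_mem_nhds one_pos)] with x hx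
    have hδ1 : Real.sqrt ‖x‖ ≤ 1 := Real.sqrt_le_one.2 hx.le
    rw [setIntegral_indicator measurableSet_ball,
      Set.inter_eq_self_of_subset_right (ball_subset_ball hδ1)]
  have hεt : Tendsto ε (𝓝[≠] (0:EuclideanSpace ℝ (Fin n))) (𝓝 0) := by
    have hsum : Tendsto (fun x : EuclideanSpace ℝ (Fin n) => m x + ‖x‖) (𝓝[≠] (0:EuclideanSpace ℝ (Fin n))) (𝓝 0) := by
      have := hmt.add hnormt
      simpa using this
    have hrp : Tendsto (fun s : ℝ => s ^ p) (𝓝 0) (𝓝 0) := by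
      have := (Real.continuousAt_rpow_const 0 p (Or.inr hp0.le)).tendsto
      simpa [Real.zero_rpow hp0.ne'] using this
    have := (hrp.comp hsum).const_mul (C₁ * K + 1)
    simpa using this
  refine ⟨C, hC, ε, hεt, min (ρ₀/2) (1/4), ⟨lt_min (by linarith [hρ₀.1]) (by norm_num), by
      have := hρ₀.2
      have h2 : min (ρ₀/2) (1/4) ≤ ρ₀/2 := min_le_left _ _
      linarith⟩, fun x hx0 hxρ => ?_⟩
  -- main estimate
  set r : ℝ := ‖x‖ with hrdef
  have hr0 : 0 < r := hx0
  have hrρ₀ : r < ρ₀/2 := lt_of_lt_of_le hxρ (min_le_left _ _)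
  have hr14 : r ≤ 1/4 := le_of_lt (lt_of_lt_of_le hxρ (min_le_right _ _))
  have hr1 : r ≤ 1 := by linarith
  set δ : ℝ := Real.sqrt r with hδdef
  have hδ0 : 0 < δ := Real.sqrt_pos.2 hr0
  have hδ1 : δ ≤ 1 := Real.sqrt_le_one.2 hr1
  have hδhalf : δ ≤ 1/2 := by
    have h1 : Real.sqrt (1/4) = 1/2 := by
      rw [show (1/4:ℝ) = (1/2)^2 by norm_num, Real.sqrt_sq (by norm_num)]
    rw [hδdef, ← h1]
    exact Real.sqrt_le_sqrt hr14
  have hrδ : r ≤ δ/2 := by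
    have h2 : δ^2 = r := Real.sq_sqrt hr0.le
    nlinarith
  have hmx0 : 0 ≤ m x := setIntegral_nonneg measurableSet_ball fun y _ => hv0 y
  have hmxV : m x ≤ V := setIntegral_mono_set hv1
    (Eventually.of_forall fun y => hv0 y) ((ball_subset_ball hδ1).eventuallyLE)
  set M : ℝ := m x + r with hMdef
  have hM0 : 0 < M := by positivity
  have hMV : M ≤ V + 1 := by rw [hMdef]; linarith
  set t : ℝ := M ^ ((1:ℝ)/n) * r ^ (γ/n) with htdef
  have ht0 : 0 < t := by positivity
  set t' : ℝ := min t (r/2) with ht'def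
  have ht'0 : 0 < t' := lt_min ht0 (by linarith)
  have ht't : t' ≤ t := min_le_left _ _
  have ht'r : t' ≤ r/2 := min_le_right _ _
  -- the integrand, in ℝ≥0∞
  set f : EuclideanSpace ℝ (Fin n) → ℝ≥0∞ := fun y => ENNReal.ofReal (v y / ‖x - y‖ ^ α) with hfdef
  -- measurability of the real integrand
  have hmeas : AEStronglyMeasurable (fun y => v y / ‖x - y‖ ^ α)
      (volume.restrict (ball (0:EuclideanSpace ℝ (Fin n)) 1)) := by
    exact (hv1.aestronglyMeasurable.aemeasurable.div
      ((measurable_const.sub measurable_id).norm.pow_const α).aemeasurable).aestronglyMeasurable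
  have hnn : 0 ≤ᵐ[volume.restrict (ball (0:EuclideanSpace ℝ (Fin n)) 1)] fun y => v y / ‖x - y‖ ^ α :=
    Eventually.of_forall fun y => div_nonneg (hv0 y) (Real.rpow_nonneg (norm_nonneg _) α)
  -- lintegral of v over balls
  have hlv : ∀ s : ℝ, s ≤ 1 → ∫⁻ y in ball (0:EuclideanSpace ℝ (Fin n)) s, ENNReal.ofReal (v y) =
      ENNReal.ofReal (∫ y in ball (0:EuclideanSpace ℝ (Fin n)) s, v y) := by
    intro s hs
    exact (ofReal_integral_eq_lintegral_ofReal (hv1.mono_set (ball_subset_ball hs))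
      (Eventually.of_forall fun y => hv0 y)).symm
  -- region A bound
  have hA : ∫⁻ y in ball x t', f y ≤
      ENNReal.ofReal (C₁ * K * (M ^ p * r ^ (-(γ * α / (n:ℝ))))) := by
    have hpt : ∀ᵐ y ∂(volume.restrict (ball x t')),
        f y ≤ ENNReal.ofReal ((C₁ * r ^ (-γ)) * ‖x - y‖ ^ (-α)) := by
      filter_upwards [ae_restrict_mem measurableSet_ball, hae0 (ball x t')] with y hy hy0
      apply ENNReal.ofReal_le_ofReal
      have hxy : ‖y - x‖ < t' := by simpa [mem_ball, dist_eq_norm] using hy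
      have hylb : r/2 ≤ ‖y‖ := by
        have h1 : r - ‖y - x‖ ≤ ‖y‖ := by
          have := norm_sub_norm_le x y
          have h2 : ‖x - y‖ = ‖y - x‖ := norm_sub_rev _ _
          have h3 : ‖x‖ - ‖y‖ ≤ ‖x - y‖ := norm_sub_norm_le x y
          rw [h2] at h3
          linarith
        linarith
      have hyub : ‖y‖ < ρ₀ := by
        have : ‖y‖ ≤ ‖x‖ + ‖y - x‖ := by
          have := norm_sub_norm_le y x
          linarith [norm_sub_norm_le y x]
        nlinarith [hxy, ht'r]
      have hy0' : 0 < ‖y‖ := norm_pos_iff.2 hy0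
      have hvy : v y ≤ C₀ * ‖y‖ ^ (-γ) := hvbound y hy0' hyub
      have hmono : ‖y‖ ^ (-γ) ≤ (r/2) ^ (-γ) :=
        Real.rpow_le_rpow_of_nonpos (by linarith) hylb (neg_nonpos.2 hγ)
      have hhalf : (r/2) ^ (-γ) = 2 ^ γ * r ^ (-γ) := by
        rw [Real.div_rpow hr0.le (by norm_num), Real.rpow_neg (by norm_num : (0:ℝ) ≤ 2)]
        field_simp
      have hvy2 : v y ≤ C₁ * r ^ (-γ) := by
        calc v y ≤ C₀ * ‖y‖ ^ (-γ) := hvy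
          _ ≤ C₀ * (r/2) ^ (-γ) := by
              apply mul_le_mul_of_nonneg_left hmono hC₀.le
          _ = C₁ * r ^ (-γ) := by rw [hhalf, hC₁def]; ring
      calc v y / ‖x - y‖ ^ α = v y * ‖x - y‖ ^ (-α) := by
            rw [Real.rpow_neg (norm_nonneg _), div_eq_mul_inv]
        _ ≤ (C₁ * r ^ (-γ)) * ‖x - y‖ ^ (-α) :=
            mul_le_mul_of_nonneg_right hvy2 (Real.rpow_nonneg (norm_nonneg _) _)
    calc ∫⁻ y in ball x t', f y
        ≤ ∫⁻ y in ball x t', ENNReal.ofReal ((C₁ * r ^ (-γ)) * ‖x - y‖ ^ (-α)) :=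
          lintegral_mono_ae hpt
      _ = ∫⁻ y in ball x t', ENNReal.ofReal (C₁ * r ^ (-γ)) *
            ENNReal.ofReal (‖x - y‖ ^ (-α)) := by
          simp_rw [ENNReal.ofReal_mul (by positivity : (0:ℝ) ≤ C₁ * r ^ (-γ))]
      _ = ENNReal.ofReal (C₁ * r ^ (-γ)) *
            ∫⁻ y in ball x t', ENNReal.ofReal (‖x - y‖ ^ (-α)) :=
          lintegral_const_mul' _ _ ENNReal.ofReal_ne_top
      _ = ENNReal.ofReal (C₁ * r ^ (-γ)) *
            ∫⁻ z in ball (0:EuclideanSpace ℝ (Fin n)) t', ENNReal.ofReal (‖z‖ ^ (-α)) := by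
          rw [lintegral_ball_sub_eq]
      _ ≤ ENNReal.ofReal (C₁ * r ^ (-γ)) * ENNReal.ofReal (K * t' ^ ((n:ℝ) - α)) :=
          mul_le_mul_right (hK t' ht'0) _
      _ ≤ ENNReal.ofReal (C₁ * r ^ (-γ)) * ENNReal.ofReal (K * t ^ ((n:ℝ) - α)) := by
          apply mul_le_mul_right
          apply ENNReal.ofReal_le_ofReal
          apply mul_le_mul_of_nonneg_left _ hK0.le
          exact Real.rpow_le_rpow ht'0.le ht't hnα.le
      _ = ENNReal.ofReal (C₁ * r ^ (-γ) * (K * t ^ ((n:ℝ) - α))) := by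
          rw [← ENNReal.ofReal_mul (by positivity)]
      _ = ENNReal.ofReal (C₁ * K * (M ^ p * r ^ (-(γ * α / (n:ℝ))))) := by
          congr 1
          have hid1 : r ^ (-γ) * t ^ ((n:ℝ) - α) = M ^ p * r ^ (-(γ * α / (n:ℝ))) := by
            rw [htdef, Real.mul_rpow (Real.rpow_nonneg hM0.le _) (Real.rpow_nonneg hr0.le _),
              ← Real.rpow_mul hM0.le, ← Real.rpow_mul hr0.le]
            rw [show (1:ℝ)/n * ((n:ℝ) - α) = p by rw [hpdef]; field_simp]
            rw [show r ^ (-γ) * (M ^ p * r ^ (γ/n * ((n:ℝ) - α))) =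
              M ^ p * (r ^ (-γ) * r ^ (γ/n * ((n:ℝ) - α))) from by ring]
            rw [← Real.rpow_add hr0]
            congr 2
            field_simp
            ring
          calc C₁ * r ^ (-γ) * (K * t ^ ((n:ℝ) - α))
              = C₁ * K * (r ^ (-γ) * t ^ ((n:ℝ) - α)) := by ring
            _ = C₁ * K * (M ^ p * r ^ (-(γ * α / (n:ℝ)))) := by rw [hid1]
  -- region B bound
  have hB : ∫⁻ y in ball (0:EuclideanSpace ℝ (Fin n)) δ \ ball x t', f y ≤
      ENNReal.ofReal (M ^ p * r ^ (-(γ * α / (n:ℝ)))) +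
        ENNReal.ofReal (2 ^ α * (V+1) * r ^ (-α)) := by
    have hstep : ∫⁻ y in ball (0:EuclideanSpace ℝ (Fin n)) δ \ ball x t', f y ≤
        ENNReal.ofReal (t' ^ (-α)) * ENNReal.ofReal M := by
      calc ∫⁻ y in ball (0:EuclideanSpace ℝ (Fin n)) δ \ ball x t', f y
          ≤ ∫⁻ y in ball (0:EuclideanSpace ℝ (Fin n)) δ \ ball x t',
              ENNReal.ofReal (t' ^ (-α)) * ENNReal.ofReal (v y) := by
            apply setLIntegral_mono' (measurableSet_ball.diff measurableSet_ball)
            intro y hy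
            rw [← ENNReal.ofReal_mul (Real.rpow_nonneg ht'0.le _)]
            apply ENNReal.ofReal_le_ofReal
            have hdist : t' ≤ ‖x - y‖ := by
              have := hy.2
              have h1 : ¬ dist y x < t' := by simpa [mem_ball] using this
              rw [dist_eq_norm] at h1
              rw [norm_sub_rev]
              linarith [not_lt.1 h1]
            have h2 : ‖x - y‖ ^ (-α) ≤ t' ^ (-α) :=
              Real.rpow_le_rpow_of_nonpos ht'0 hdist (neg_nonpos.2 hα0.le)
            calc v y / ‖x - y‖ ^ α = v y * ‖x - y‖ ^ (-α) := by
                  rw [Real.rpow_neg (norm_nonneg _), div_eq_mul_inv]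
              _ ≤ v y * t' ^ (-α) := mul_le_mul_of_nonneg_left h2 (hv0 y)
              _ = t' ^ (-α) * v y := by ring
        _ ≤ ∫⁻ y in ball (0:EuclideanSpace ℝ (Fin n)) δ, ENNReal.ofReal (t' ^ (-α)) * ENNReal.ofReal (v y) :=
            lintegral_mono_set Set.diff_subset
        _ = ENNReal.ofReal (t' ^ (-α)) * ∫⁻ y in ball (0:EuclideanSpace ℝ (Fin n)) δ, ENNReal.ofReal (v y) :=
            lintegral_const_mul' _ _ ENNReal.ofReal_ne_top
        _ = ENNReal.ofReal (t' ^ (-α)) * ENNReal.ofReal (m x) := by rw [hlv δ hδ1]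
        _ ≤ ENNReal.ofReal (t' ^ (-α)) * ENNReal.ofReal M :=
            mul_le_mul_right (ENNReal.ofReal_le_ofReal (by rw [hMdef]; linarith)) _
    rcases le_total t (r/2) with hcase | hcase
    · have ht'eq : t' = t := min_eq_left hcase
      have hid2 : t ^ (-α) * M = M ^ p * r ^ (-(γ * α / (n:ℝ))) := by
        rw [htdef, Real.mul_rpow (Real.rpow_nonneg hM0.le _) (Real.rpow_nonneg hr0.le _),
          ← Real.rpow_mul hM0.le, ← Real.rpow_mul hr0.le]
        have hM1 : M = M ^ (1:ℝ) := (Real.rpow_one M).symm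
        calc M ^ ((1:ℝ)/n * (-α)) * r ^ (γ/n * (-α)) * M
            = M ^ ((1:ℝ)/n * (-α)) * M ^ (1:ℝ) * r ^ (γ/n * (-α)) := by
              rw [← hM1]; ring
          _ = M ^ ((1:ℝ)/n * (-α) + 1) * r ^ (γ/n * (-α)) := by
              rw [← Real.rpow_add hM0]
          _ = M ^ p * r ^ (-(γ * α / (n:ℝ))) := by
              congr 2
              · rw [hpdef]; field_simp; try ring
              · field_simp; try ring
      refine le_trans hstep (le_trans ?_ le_self_add)
      rw [ht'eq, ← ENNReal.ofReal_mul (Real.rpow_nonneg ht0.le _)]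
      exact ENNReal.ofReal_le_ofReal (le_of_eq hid2)
    · have ht'eq : t' = r/2 := min_eq_right hcase
      have hval : (r/2) ^ (-α) * M ≤ 2 ^ α * (V+1) * r ^ (-α) := by
        have hh : (r/2) ^ (-α) = 2 ^ α * r ^ (-α) := by
          rw [Real.div_rpow hr0.le (by norm_num), Real.rpow_neg (by norm_num : (0:ℝ) ≤ 2)]
          field_simp
        rw [hh]
        calc 2 ^ α * r ^ (-α) * M ≤ 2 ^ α * r ^ (-α) * (V + 1) := by
              apply mul_le_mul_of_nonneg_left hMV (by positivity)
          _ = 2 ^ α * (V+1) * r ^ (-α) := by ring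
      refine le_trans hstep (le_trans ?_ le_add_self)
      rw [ht'eq, ← ENNReal.ofReal_mul (Real.rpow_nonneg (by linarith : (0:ℝ) ≤ r/2) _)]
      exact ENNReal.ofReal_le_ofReal hval
  -- region C bound
  have hCbd : ∫⁻ y in (ball (0:EuclideanSpace ℝ (Fin n)) 1 \ ball (0:EuclideanSpace ℝ (Fin n)) δ) \ ball x t', f y ≤
      ENNReal.ofReal (2 ^ α * V * r ^ (-α)) := by
    have hδ2 : (0:ℝ) < δ/2 := by linarith
    calc ∫⁻ y in (ball (0:EuclideanSpace ℝ (Fin n)) 1 \ ball (0:EuclideanSpace ℝ (Fin n)) δ) \ ball x t', f y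
        ≤ ∫⁻ y in (ball (0:EuclideanSpace ℝ (Fin n)) 1 \ ball (0:EuclideanSpace ℝ (Fin n)) δ) \ ball x t',
            ENNReal.ofReal ((δ/2) ^ (-α)) * ENNReal.ofReal (v y) := by
          apply setLIntegral_mono'
            (((measurableSet_ball.diff measurableSet_ball).diff measurableSet_ball))
          intro y hy
          rw [← ENNReal.ofReal_mul (Real.rpow_nonneg hδ2.le _)]
          apply ENNReal.ofReal_le_ofReal
          have hyδ : δ ≤ ‖y‖ := by
            have := hy.1.2
            simpa [mem_ball, dist_eq_norm, not_lt] using this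
          have hdist : δ/2 ≤ ‖x - y‖ := by
            have h3 : ‖y‖ - ‖x‖ ≤ ‖y - x‖ := norm_sub_norm_le y x
            rw [norm_sub_rev]
            have : ‖x‖ = r := rfl
            linarith [hrδ]
          have h2 : ‖x - y‖ ^ (-α) ≤ (δ/2) ^ (-α) :=
            Real.rpow_le_rpow_of_nonpos hδ2 hdist (neg_nonpos.2 hα0.le)
          calc v y / ‖x - y‖ ^ α = v y * ‖x - y‖ ^ (-α) := by
                rw [Real.rpow_neg (norm_nonneg _), div_eq_mul_inv]
            _ ≤ v y * (δ/2) ^ (-α) := mul_le_mul_of_nonneg_left h2 (hv0 y)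
            _ = (δ/2) ^ (-α) * v y := by ring
      _ ≤ ∫⁻ y in ball (0:EuclideanSpace ℝ (Fin n)) 1, ENNReal.ofReal ((δ/2) ^ (-α)) * ENNReal.ofReal (v y) :=
          lintegral_mono_set (Set.diff_subset.trans Set.diff_subset)
      _ = ENNReal.ofReal ((δ/2) ^ (-α)) * ∫⁻ y in ball (0:EuclideanSpace ℝ (Fin n)) 1, ENNReal.ofReal (v y) :=
          lintegral_const_mul' _ _ ENNReal.ofReal_ne_top
      _ = ENNReal.ofReal ((δ/2) ^ (-α)) * ENNReal.ofReal V := by rw [hlv 1 le_rfl]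
      _ ≤ ENNReal.ofReal (2 ^ α * V * r ^ (-α)) := by
          rw [← ENNReal.ofReal_mul (Real.rpow_nonneg hδ2.le _)]
          apply ENNReal.ofReal_le_ofReal
          have hh : (δ/2) ^ (-α) = 2 ^ α * δ ^ (-α) := by
            rw [Real.div_rpow hδ0.le (by norm_num), Real.rpow_neg (by norm_num : (0:ℝ) ≤ 2)]
            field_simp
          have hδα : δ ^ (-α) = r ^ (-(α/2)) := by
            rw [hδdef, Real.sqrt_eq_rpow, ← Real.rpow_mul hr0.le]
            congr 1
            ring
          have hmono : r ^ (-(α/2)) ≤ r ^ (-α) :=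
            Real.rpow_le_rpow_of_exponent_ge hr0 hr1 (by linarith)
          have h2α : (0:ℝ) < 2 ^ α := Real.rpow_pos_of_pos (by norm_num) α
          rw [hh, hδα]
          calc 2 ^ α * r ^ (-(α/2)) * V ≤ 2 ^ α * r ^ (-α) * V :=
                mul_le_mul_of_nonneg_right (mul_le_mul_of_nonneg_left hmono h2α.le) hV0
            _ = 2 ^ α * V * r ^ (-α) := by ring
  -- combine
  have hcover : ball (0:EuclideanSpace ℝ (Fin n)) 1 ⊆ ball x t' ∪
      ((ball (0:EuclideanSpace ℝ (Fin n)) δ \ ball x t') ∪ ((ball (0:EuclideanSpace ℝ (Fin n)) 1 \ ball (0:EuclideanSpace ℝ (Fin n)) δ) \ ball x t')) := by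
    intro y hy
    by_cases h1 : y ∈ ball x t'
    · exact Set.mem_union_left _ h1
    by_cases h2 : y ∈ ball (0:EuclideanSpace ℝ (Fin n)) δ
    · exact Set.mem_union_right _ (Set.mem_union_left _ ⟨h2, h1⟩)
    · exact Set.mem_union_right _ (Set.mem_union_right _ ⟨⟨hy, h2⟩, h1⟩)
  have hmain : ∫⁻ y in ball (0:EuclideanSpace ℝ (Fin n)) 1, f y ≤
      ENNReal.ofReal (C * r ^ (-α) + ε x * r ^ (-(γ * α / (n:ℝ)))) := by
    calc ∫⁻ y in ball (0:EuclideanSpace ℝ (Fin n)) 1, f y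
        ≤ ∫⁻ y in ball x t' ∪
            ((ball (0:EuclideanSpace ℝ (Fin n)) δ \ ball x t') ∪ ((ball (0:EuclideanSpace ℝ (Fin n)) 1 \ ball (0:EuclideanSpace ℝ (Fin n)) δ) \ ball x t')), f y :=
          lintegral_mono_set hcover
      _ ≤ (∫⁻ y in ball x t', f y) +
            ((∫⁻ y in ball (0:EuclideanSpace ℝ (Fin n)) δ \ ball x t', f y) +
              ∫⁻ y in (ball (0:EuclideanSpace ℝ (Fin n)) 1 \ ball (0:EuclideanSpace ℝ (Fin n)) δ) \ ball x t', f y) :=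
          le_trans (lintegral_union_le _ _ _) (by gcongr; exact lintegral_union_le _ _ _)
      _ ≤ ENNReal.ofReal (C₁ * K * (M ^ p * r ^ (-(γ * α / (n:ℝ))))) +
            ((ENNReal.ofReal (M ^ p * r ^ (-(γ * α / (n:ℝ)))) +
              ENNReal.ofReal (2 ^ α * (V+1) * r ^ (-α))) +
              ENNReal.ofReal (2 ^ α * V * r ^ (-α))) := by
          exact add_le_add hA (add_le_add hB hCbd)
      _ ≤ ENNReal.ofReal (C * r ^ (-α) + ε x * r ^ (-(γ * α / (n:ℝ)))) := by
          rw [← ENNReal.ofReal_add (by positivity) (by positivity),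
            ← ENNReal.ofReal_add (by positivity) (by positivity),
            ← ENNReal.ofReal_add (by positivity) (by positivity)]
          apply ENNReal.ofReal_le_ofReal
          have hεx : ε x = (C₁ * K + 1) * M ^ p := by rw [hεdef, hMdef]
          have he1 : (0:ℝ) ≤ r ^ (-α) := Real.rpow_nonneg hr0.le _
          have he2 : (0:ℝ) ≤ r ^ (-(γ * α / (n:ℝ))) := Real.rpow_nonneg hr0.le _
          have hMp : (0:ℝ) ≤ M ^ p := Real.rpow_nonneg hM0.le _
          rw [hεx, hCdef]
          nlinarith
  -- conclude
  have hrepr : ∫ y in ball (0:EuclideanSpace ℝ (Fin n)) 1, v y / ‖x - y‖ ^ α =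
      (∫⁻ y in ball (0:EuclideanSpace ℝ (Fin n)) 1, f y).toReal := by
    rw [integral_eq_lintegral_of_nonneg_ae hnn hmeas]
  rw [hrepr]
  apply ENNReal.toReal_le_of_le_ofReal _ hmain
  have hεx : 0 ≤ ε x := by
    rw [hεdef]
    have : (0:ℝ) ≤ (m x + ‖x‖) ^ p := Real.rpow_nonneg (by positivity) _
    positivity
  have he1 : (0:ℝ) ≤ r ^ (-α) := Real.rpow_nonneg hr0.le _
  have he2 : (0:ℝ) ≤ r ^ (-(γ * α / (n:ℝ))) := Real.rpow_nonneg hr0.le _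
  positivity
end
end
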